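/- arXiv:1110.2388 — 12 statements merged into one kernel-verified Lean document; each statement's English description precedes it below -/
import Mathlib

section
/- The following are equivalent: (a) there exist measurable functions f i : Fin (k i) → ([0,1] → Fin (m i)), one for each i ∈ Fin n, such that for every treatment φ ∈ T the pushforward of the uniform probability measure on the unit interval [0,1] (Lebesgue measure restricted to [0,1]) under the map u ↦ (fun i => f i (φ i) u) : [0,1] → Π i, Fin (m i) equals μ φ; (b) there exists a JDC-measure for the family (μ φ)_{φ ∈ T}. (This combines the Joint Distribution Criterion for selective influences with the statement that the hidden random entity R of the definition of selective influences can always be chosen to be a random variable uniformly distributed on [0,1].) -/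
open MeasureTheory

/-- Any probability measure on a nonempty finite measurable space with measurable
singletons is the pushforward of the uniform measure on `[0,1]`. -/
lemma aux_exists_map_uniform {α : Type*} [Fintype α] [Nonempty α] [MeasurableSpace α]
    [MeasurableSingletonClass α] (ξ : Measure α) [IsProbabilityMeasure ξ] :
    ∃ g : ℝ → α, Measurable g ∧
      Measure.map g (volume.restrict (Set.Icc (0 : ℝ) 1)) = ξ := by
  classical
  set N := Fintype.card α with hNdef
  have hN : 0 < N := Fintype.card_pos
  set e : Fin N ≃ α := (Fintype.equivFin α).symm with he
  set q : ℕ → ℝ := fun l => if h : l < N then (ξ {e ⟨l, h⟩}).toReal else 0 with hqdef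
  have hq0 : ∀ l, 0 ≤ q l := by
    intro l
    by_cases h : l < N <;> simp [hqdef, h, ENNReal.toReal_nonneg]
  set s : ℕ → ℝ := fun j => ∑ l ∈ Finset.range j, q l with hsdef
  have hs0 : s 0 = 0 := by simp [hsdef]
  have hmono : Monotone s := by
    intro a b hab
    exact Finset.sum_le_sum_of_subset_of_nonneg (Finset.range_subset_range.2 hab)
      (fun i _ _ => hq0 i)
  have hstep : ∀ j, s (j + 1) = s j + q j := by
    intro j; simp [hsdef, Finset.sum_range_succ]
  have hsN : s N = 1 := by
    have h1 : s N = ∑ l : Fin N, q l := (Fin.sum_univ_eq_sum_range q N).symm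
    have h2 : ∀ l : Fin N, q (l : ℕ) = (ξ {e l}).toReal := by
      intro l
      simp [hqdef, l.isLt]
    have h3 : ∑ l : Fin N, (ξ {e l}).toReal = (∑ l : Fin N, ξ {e l}).toReal :=
      (ENNReal.toReal_sum (fun a _ => measure_ne_top ξ _)).symm
    have h4 : ∑ l : Fin N, ξ {e l} = ∑ a : α, ξ {a} :=
      Equiv.sum_comp e (fun a => ξ {a})
    have h5 : ∑ a : α, ξ {a} = ξ Set.univ := by
      rw [← measure_biUnion_finset
        (fun a _ b _ hab => Set.disjoint_singleton.2 hab)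
        (fun a _ => measurableSet_singleton a)]
      congr 1
      simp [Set.iUnion_of_singleton]
    rw [h1]
    simp_rw [h2]
    rw [h3, h4, h5, measure_univ, ENNReal.toReal_one]
  -- the index function
  set idx : ℝ → ℕ := fun u => Nat.findGreatest (fun j => s j ≤ u) (N - 1) with hidxdef
  have hidx_lt : ∀ u, idx u < N := by
    intro u
    exact lt_of_le_of_lt (Nat.findGreatest_le _) (Nat.sub_lt hN one_pos)
  set g : ℝ → α := fun u => e ⟨idx u, hidx_lt u⟩ with hgdef
  -- characterization of the fibers of idx
  have hA : ∀ j : ℕ, j < N →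
      {u : ℝ | idx u = j} =
        {u : ℝ | (j = 0 ∨ s j ≤ u) ∧ (j = N - 1 ∨ u < s (j + 1))} := by
    intro j hj
    ext u
    simp only [Set.mem_setOf_eq, hidxdef]
    rw [Nat.findGreatest_eq_iff]
    constructor
    · rintro ⟨hj1, hj2, hj3⟩
      constructor
      · by_cases h0 : j = 0
        · exact Or.inl h0
        · exact Or.inr (hj2 h0)
      · by_cases hl : j = N - 1
        · exact Or.inl hl
        · refine Or.inr ?_
          have hjl : j + 1 ≤ N - 1 := by omega
          have := @hj3 (j + 1) (by omega) hjl
          exact lt_of_not_ge this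
    · rintro ⟨h1, h2⟩
      refine ⟨by omega, ?_, ?_⟩
      · intro h0
        rcases h1 with h1 | h1
        · exact absurd h1 h0
        · exact h1
      · intro l hl1 hl2
        rcases h2 with h2 | h2
        · omega
        · have : s (j + 1) ≤ s l := hmono (by omega)
          exact not_le.2 (lt_of_lt_of_le h2 this)
  have hAmeas : ∀ j : ℕ, j < N → MeasurableSet {u : ℝ | idx u = j} := by
    intro j hj
    rw [hA j hj]
    have h1 : MeasurableSet {u : ℝ | j = 0 ∨ s j ≤ u} := by
      by_cases h : j = 0
      · simp [h]
      · simp only [h, false_or]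
        exact measurableSet_Ici
    have h2 : MeasurableSet {u : ℝ | j = N - 1 ∨ u < s (j + 1)} := by
      by_cases h : j = N - 1
      · simp [h]
      · simp only [h, false_or]
        exact measurableSet_Iio
    exact h1.inter h2
  -- preimages of g
  have hpre : ∀ a : α, g ⁻¹' {a} = {u : ℝ | idx u = ((e.symm a : Fin N) : ℕ)} := by
    intro a
    ext u
    simp only [Set.mem_preimage, Set.mem_singleton_iff, Set.mem_setOf_eq, hgdef]
    constructor
    · intro h
      rw [← h, Equiv.symm_apply_apply]
    · intro h
      have : (⟨idx u, hidx_lt u⟩ : Fin N) = e.symm a := by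
        apply Fin.ext
        exact h
      rw [this, Equiv.apply_symm_apply]
  have hgm : Measurable g := by
    apply measurable_to_countable'
    intro a
    rw [hpre a]
    exact hAmeas _ (e.symm a).isLt
  -- measure computation
  have key : ∀ (j : ℕ) (hj : j < N),
      (volume.restrict (Set.Icc (0 : ℝ) 1)) {u : ℝ | idx u = j} = ξ {e ⟨j, hj⟩} := by
    intro j hj
    rw [Measure.restrict_apply (hAmeas j hj)]
    have hsj0 : 0 ≤ s j := by rw [← hs0]; exact hmono (Nat.zero_le j)
    have hsj1 : s (j + 1) ≤ 1 := by rw [← hsN]; exact hmono hj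
    have hq : ξ {e ⟨j, hj⟩} = ENNReal.ofReal (q j) := by
      simp only [hqdef, hj, dif_pos]
      rw [ENNReal.ofReal_toReal (measure_ne_top ξ _)]
    by_cases hlast : j = N - 1
    · have hset : {u : ℝ | idx u = j} ∩ Set.Icc 0 1 = Set.Icc (s j) 1 := by
        rw [hA j hj]
        ext u
        simp only [Set.mem_inter_iff, Set.mem_setOf_eq, Set.mem_Icc]
        constructor
        · rintro ⟨⟨h1, _⟩, hu0, hu1⟩
          refine ⟨?_, hu1⟩
          rcases h1 with h1 | h1
          · rw [h1, hs0]; exact hu0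
          · exact h1
        · rintro ⟨h1, h2⟩
          exact ⟨⟨Or.inr h1, Or.inl hlast⟩, le_trans hsj0 h1, h2⟩
      rw [hset, Real.volume_Icc, hq]
      congr 1
      have hjN : j + 1 = N := by omega
      have := hstep j
      rw [hjN, hsN] at this
      linarith
    · have hjlt : j + 1 ≤ N - 1 := by omega
      have hset : {u : ℝ | idx u = j} ∩ Set.Icc 0 1 = Set.Ico (s j) (s (j + 1)) := by
        rw [hA j hj]
        ext u
        simp only [Set.mem_inter_iff, Set.mem_setOf_eq, Set.mem_Icc, Set.mem_Ico]
        constructor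
        · rintro ⟨⟨h1, h2⟩, hu0, hu1⟩
          refine ⟨?_, ?_⟩
          · rcases h1 with h1 | h1
            · rw [h1, hs0]; exact hu0
            · exact h1
          · rcases h2 with h2 | h2
            · exact absurd h2 hlast
            · exact h2
        · rintro ⟨h1, h2⟩
          exact ⟨⟨Or.inr h1, Or.inr h2⟩, le_trans hsj0 h1, le_trans (le_of_lt h2) hsj1⟩
      rw [hset, Real.volume_Ico, hq]
      congr 1
      have := hstep j
      linarith
  refine ⟨g, hgm, ?_⟩
  apply Measure.ext_iff_singleton.mpr
  intro a
  rw [Measure.map_apply hgm (measurableSet_singleton a), hpre a,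
    key _ (e.symm a).isLt]
  congr 1
  rw [Fin.eta, Equiv.apply_symm_apply]

/-- Joint Distribution Criterion combined with the fact that the hidden variable `R`
can be chosen uniformly distributed on `[0,1]`: selective influences (representation
of all `μ φ`, `φ ∈ T`, as distributions of `(f i (φ i) R)_i` for a uniform `R` on `[0,1]`)
hold iff a JDC-measure exists. -/
theorem jdc_iff_uniform_representation
    (n : ℕ) (hn : 1 ≤ n) (k m : Fin n → ℕ)
    (hk : ∀ i, 1 ≤ k i) (hm : ∀ i, 1 ≤ m i)
    (T : Set (∀ i, Fin (k i))) (hT : T.Nonempty)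
    (μ : (∀ i, Fin (k i)) → Measure (∀ i, Fin (m i)))
    (hμ : ∀ φ ∈ T, IsProbabilityMeasure (μ φ)) :
    (∃ f : ∀ i, Fin (k i) → ℝ → Fin (m i),
      (∀ i j, Measurable (f i j)) ∧
      ∀ φ ∈ T,
        Measure.map (fun u => fun i => f i (φ i) u)
          (volume.restrict (Set.Icc (0 : ℝ) 1)) = μ φ) ↔
    (∃ ξ : Measure (∀ i, Fin (k i) → Fin (m i)),
      IsProbabilityMeasure ξ ∧
      ∀ φ ∈ T, Measure.map (fun L => fun i => L i (φ i)) ξ = μ φ) := by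
  have hvol : IsProbabilityMeasure (volume.restrict (Set.Icc (0 : ℝ) 1)) := by
    constructor
    rw [Measure.restrict_apply_univ, Real.volume_Icc]
    norm_num
  have houter : ∀ φ : ∀ i, Fin (k i),
      Measurable (fun L : ∀ i, Fin (k i) → Fin (m i) => fun i => L i (φ i)) := by
    intro φ
    apply measurable_pi_lambda
    intro i
    exact (measurable_pi_apply (φ i)).comp (measurable_pi_apply i)
  constructor
  · rintro ⟨f, hfm, hf⟩
    have hinner : Measurable
        (fun u : ℝ => fun i => fun j : Fin (k i) => f i j u) := by
      apply measurable_pi_lambda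
      intro i
      apply measurable_pi_lambda
      intro j
      exact hfm i j
    refine ⟨Measure.map (fun u : ℝ => fun i => fun j : Fin (k i) => f i j u)
      (volume.restrict (Set.Icc (0 : ℝ) 1)), ?_, ?_⟩
    · exact Measure.isProbabilityMeasure_map hinner.aemeasurable
    · intro φ hφ
      rw [Measure.map_map (houter φ) hinner]
      exact hf φ hφ
  · rintro ⟨ξ, hξ, hξT⟩
    haveI : Nonempty (∀ i, Fin (k i) → Fin (m i)) :=
      ⟨fun i _ => ⟨0, hm i⟩⟩
    obtain ⟨g, hgm, hg⟩ := aux_exists_map_uniform ξ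
    refine ⟨fun i j u => g u i j, ?_, ?_⟩
    · intro i j
      exact ((measurable_pi_apply j).comp (measurable_pi_apply i)).comp hgm
    · intro φ hφ
      have : (fun u : ℝ => fun i => g u i (φ i)) =
          (fun L : ∀ i, Fin (k i) → Fin (m i) => fun i => L i (φ i)) ∘ g := rfl
      rw [this, ← Measure.map_map (houter φ) hgm, hg]
      exact hξT φ hφ
end

section
/- (Complete marginal selectivity.) Suppose a JDC-measure for the family (μ φ)_{φ ∈ T} exists. Then for every subset S ⊆ Fin n and all treatments φ, φ′ ∈ T with φ i = φ′ i for every i ∈ S, the pushforwards of μ φ and of μ φ′ under the restriction map a ↦ (fun i : S => a i) : (Π i, Fin (m i)) → (Π i : S, Fin (m i)) coincide. In particular, the marginal distribution of the i-th coordinate under μ φ depends only on the factor point φ i. -/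
open MeasureTheory

/-- Complete marginal selectivity: if a JDC-measure exists, then for any subset `S` of the
indices, the joint marginal distribution of the coordinates in `S` depends only on the
factor points of the factors indexed by `S`. -/
theorem marginal_selectivity_of_jdc
    (n : ℕ) (hn : 1 ≤ n) (k m : Fin n → ℕ)
    (hk : ∀ i, 1 ≤ k i) (hm : ∀ i, 1 ≤ m i)
    (T : Set (∀ i, Fin (k i))) (hT : T.Nonempty)
    (μ : (∀ i, Fin (k i)) → Measure (∀ i, Fin (m i)))
    (hμ : ∀ φ ∈ T, IsProbabilityMeasure (μ φ))
    (hJDC : ∃ ξ : Measure (∀ i, Fin (k i) → Fin (m i)),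
      IsProbabilityMeasure ξ ∧
      ∀ φ ∈ T, Measure.map (fun L => fun i => L i (φ i)) ξ = μ φ) :
    ∀ S : Set (Fin n), ∀ φ ∈ T, ∀ φ' ∈ T, (∀ i ∈ S, φ i = φ' i) →
      Measure.map (fun (a : ∀ i, Fin (m i)) => fun i : S => a i.1) (μ φ) =
      Measure.map (fun (a : ∀ i, Fin (m i)) => fun i : S => a i.1) (μ φ') := by
  obtain ⟨ξ, hξ, hmap⟩ := hJDC
  intro S φ hφ φ' hφ' hagree
  rw [← hmap φ hφ, ← hmap φ' hφ',
    Measure.map_map (by measurability) (by measurability),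
    Measure.map_map (by measurability) (by measurability)]
  congr 1
  funext L
  simp only [Function.comp]
  funext i
  rw [hagree i.1 i.2]
end

section
/- (Invariance under factor-point-specific transformations.) Let m′ : Fin n → ℕ with m′ i ≥ 1, and for each i let F i : Fin (k i) → Fin (m i) → Fin (m′ i) be an arbitrary family of functions (a transformation of the values of the i-th output that may depend on the point of the i-th factor). For each φ ∈ T define ν φ as the pushforward of μ φ under the map a ↦ (fun i => F i (φ i) (a i)). If the family (μ φ)_{φ ∈ T} has a JDC-measure, then the transformed family (ν φ)_{φ ∈ T} has a JDC-measure (with values Fin (m′ i)). -/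
open MeasureTheory

/-- Invariance under factor-point-specific transformations: if the family `(μ φ)_{φ ∈ T}`
has a JDC-measure, then so does the family obtained by transforming the `i`-th output by
an arbitrary function that may depend on the point of the `i`-th factor. -/
theorem jdc_invariant_under_factor_point_specific_transformations
    (n : ℕ) (hn : 1 ≤ n) (k m : Fin n → ℕ)
    (hk : ∀ i, 1 ≤ k i) (hm : ∀ i, 1 ≤ m i)
    (T : Set (∀ i, Fin (k i))) (hT : T.Nonempty)
    (μ : (∀ i, Fin (k i)) → Measure (∀ i, Fin (m i)))
    (hμ : ∀ φ ∈ T, IsProbabilityMeasure (μ φ))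
    (m' : Fin n → ℕ) (hm' : ∀ i, 1 ≤ m' i)
    (F : ∀ i, Fin (k i) → Fin (m i) → Fin (m' i))
    (ν : (∀ i, Fin (k i)) → Measure (∀ i, Fin (m' i)))
    (hν : ∀ φ ∈ T,
      ν φ = Measure.map (fun (a : ∀ i, Fin (m i)) => fun i => F i (φ i) (a i)) (μ φ))
    (hJDC : ∃ ξ : Measure (∀ i, Fin (k i) → Fin (m i)),
      IsProbabilityMeasure ξ ∧
      ∀ φ ∈ T, Measure.map (fun L => fun i => L i (φ i)) ξ = μ φ) :
    ∃ ξ' : Measure (∀ i, Fin (k i) → Fin (m' i)),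
      IsProbabilityMeasure ξ' ∧
      ∀ φ ∈ T, Measure.map (fun L => fun i => L i (φ i)) ξ' = ν φ := by
  obtain ⟨ξ, hξp, hξ⟩ := hJDC
  refine ⟨Measure.map (fun L => fun i j => F i j (L i j)) ξ, ?_, ?_⟩
  · exact MeasureTheory.Measure.isProbabilityMeasure_map
      (Measurable.aemeasurable (measurable_of_countable _))
  · intro φ hφ
    rw [hν φ hφ, ← hξ φ hφ]
    rw [Measure.map_map (measurable_of_countable _) (measurable_of_countable _),
        Measure.map_map (measurable_of_countable _) (measurable_of_countable _)]
    rfl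
end

section
/- Let T = Π i, Fin (k i) be the complete set of treatments, and regard M as a real matrix with rows indexed by pairs (l, φ) ∈ (Π i, Fin (m i)) × (Π i, Fin (k i)) and columns indexed by L ∈ Π i, (Fin (k i) → Fin (m i)), with entry 1 if L i (φ i) = l i for all i and entry 0 otherwise. Then the rank of M equals ∏ i, (k i * (m i − 1) + 1). -/
/-! Auxiliary development for the rank of the LFT matrix.

The matrix `M` is an (index-wise) tensor product over `i : Fin n` of single-factor
matrices `A i` with rows `Fin (m i) × Fin (k i)` and columns `Fin (k i) → Fin (m i)`.
For each factor we exhibit a factorization `A = C * D` through a type of cardinality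
`k * (m - 1) + 1`, and matrices `E`, `F` with `E * A * F = 1`, which sandwich the rank. -/

/-- embedding of `Fin (M-1)` onto the nonzero elements of `Fin M`. -/
def LFTemb (M : ℕ) (a : Fin (M - 1)) : Fin M := ⟨a.val + 1, by have := a.isLt; omega⟩

lemma LFTemb_val (M : ℕ) (a : Fin (M - 1)) : (LFTemb M a).val = a.val + 1 := rfl

lemma sum_emb (M : ℕ) (x : Fin M) :
    ∑ b : Fin (M - 1), (if x = LFTemb M b then (1 : ℝ) else 0)
      = if x.val = 0 then 0 else 1 := by
  by_cases hx : x.val = 0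
  · simp only [hx, if_true]
    apply Finset.sum_eq_zero
    intro b _
    have : x ≠ LFTemb M b := by
      intro h; apply absurd (congrArg Fin.val h); simp [hx, LFTemb_val]
    simp [this]
  · have hb : x.val - 1 < M - 1 := by have := x.isLt; omega
    have : ∀ b : Fin (M-1), (x = LFTemb M b) ↔ (b = ⟨x.val - 1, hb⟩) := by
      intro b
      constructor
      · intro h; apply Fin.ext; have := congrArg Fin.val h; simp [LFTemb_val] at this; simp; omega
      · intro h; subst h; apply Fin.ext; simp [LFTemb_val]; omega
    simp only [this]
    simp [Finset.sum_ite_eq', hx]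

def Cf (K M : ℕ) : (Fin M × Fin K) → Option (Fin K × Fin (M - 1)) → ℝ
  | p, none => if p.1.val = 0 then 1 else 0
  | p, some s => if p.2 = s.1 then
      ((if p.1 = LFTemb M s.2 then 1 else 0) - (if p.1.val = 0 then 1 else 0)) else 0

def Df (K M : ℕ) : Option (Fin K × Fin (M - 1)) → (Fin K → Fin M) → ℝ
  | none, _ => 1
  | some s, f => if f s.1 = LFTemb M s.2 then 1 else 0

def Ef (K M : ℕ) : Option (Fin K × Fin (M - 1)) → (Fin M × Fin K) → ℝ
  | none, p => (if p.1.val = 0 ∧ p.2.val = 0 then 1 else 0)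
      - (if p.1.val ≠ 0 ∧ p.2.val ≠ 0 then 1 else 0)
  | some s, p => if p.1 = LFTemb M s.2 ∧ p.2 = s.1 then 1 else 0

def fsel (K M : ℕ) (hM : 0 < M) : Option (Fin K × Fin (M - 1)) → Fin K → Fin M
  | none, _ => ⟨0, hM⟩
  | some s, φ => if φ = s.1 then LFTemb M s.2 else ⟨0, hM⟩

def Ff (K M : ℕ) (hM : 0 < M) : (Fin K → Fin M) → Option (Fin K × Fin (M - 1)) → ℝ :=
  fun f s => if f = fsel K M hM s then 1 else 0

lemma CD (K M : ℕ) (p : Fin M × Fin K) (f : Fin K → Fin M) :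
    ∑ s : Option (Fin K × Fin (M - 1)), Cf K M p s * Df K M s f
      = if f p.2 = p.1 then 1 else 0 := by
  obtain ⟨a, φ⟩ := p
  rw [Fintype.sum_option, Fintype.sum_prod_type]
  simp only [Cf, Df, mul_one, ite_mul, zero_mul]
  have collapse : ∀ ψ : Fin K, ∑ b : Fin (M-1),
      (if φ = ψ then ((if a = LFTemb M b then (1:ℝ) else 0) - if a.val = 0 then 1 else 0)
        * (if f ψ = LFTemb M b then 1 else 0) else 0)
      = if φ = ψ then ∑ b : Fin (M-1),
          ((if a = LFTemb M b then (1:ℝ) else 0) - if a.val = 0 then 1 else 0)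
          * (if f ψ = LFTemb M b then 1 else 0) else 0 := by
    intro ψ; split <;> simp
  rw [Finset.sum_congr rfl (fun ψ _ => collapse ψ), Finset.sum_ite_eq]
  simp only [Finset.mem_univ, if_true]
  by_cases ha : a.val = 0
  · have hne : ∀ b : Fin (M-1), a ≠ LFTemb M b := by
      intro b h; have := congrArg Fin.val h; simp [LFTemb] at this; omega
    simp only [ha, if_true, hne, if_false, zero_sub, neg_mul, one_mul,
      Finset.sum_neg_distrib, sum_emb]
    by_cases hf : (f φ).val = 0
    · have : f φ = a := Fin.ext (by omega)
      simp [hf, this, ha]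
    · have : f φ ≠ a := by intro h; apply hf; rw [h]; exact ha
      simp [hf, this]
  · simp only [ha, if_false, sub_zero]
    have key : ∀ b : Fin (M-1),
        (if a = LFTemb M b then (1:ℝ) else 0) * (if f φ = LFTemb M b then 1 else 0)
        = (if f φ = a then 1 else 0) * (if a = LFTemb M b then 1 else 0) := by
      intro b
      by_cases h1 : a = LFTemb M b
      · by_cases h2 : f φ = a
        · have h3 : f φ = LFTemb M b := h2.trans h1
          simp [h1, h2, h3]
        · have : f φ ≠ LFTemb M b := by rw [← h1]; exact h2
          simp [h1, h2, this]
      · simp [h1]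
    rw [Finset.sum_congr rfl (fun b _ => key b), ← Finset.mul_sum, sum_emb]
    simp [ha]

lemma AF (K M : ℕ) (hM : 0 < M) (p : Fin M × Fin K) (u : Option (Fin K × Fin (M - 1))) :
    ∑ f : Fin K → Fin M, (if f p.2 = p.1 then (1:ℝ) else 0) * Ff K M hM f u
      = if fsel K M hM u p.2 = p.1 then 1 else 0 := by
  simp only [Ff, mul_ite, mul_one, mul_zero]
  rw [Finset.sum_ite_eq' Finset.univ (fsel K M hM u)
    (fun f => if f p.2 = p.1 then (1:ℝ) else 0)]
  simp

lemma emb_ne_zero (M : ℕ) (hM : 0 < M) (b : Fin (M-1)) : LFTemb M b ≠ ⟨0, hM⟩ := by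
  intro h; have := congrArg Fin.val h; simp [LFTemb] at this

lemma EAF (K M : ℕ) (hK : 0 < K) (hM : 0 < M) (t u : Option (Fin K × Fin (M - 1))) :
    ∑ a : Fin M, ∑ b : Fin K, Ef K M t (a, b) * (if fsel K M hM u b = a then (1:ℝ) else 0)
      = if t = u then 1 else 0 := by
  rw [Finset.sum_comm]
  have collapse : ∀ φ : Fin K,
      ∑ a : Fin M, Ef K M t (a, φ) * (if fsel K M hM u φ = a then (1:ℝ) else 0)
        = Ef K M t (fsel K M hM u φ, φ) := by
    intro φ
    simp only [mul_ite, mul_one, mul_zero]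
    rw [Finset.sum_ite_eq Finset.univ (fsel K M hM u φ) (fun a => Ef K M t (a, φ))]
    simp
  rw [Finset.sum_congr rfl (fun φ _ => collapse φ)]
  match t, u with
  | none, none =>
      have hz : ((⟨0,hK⟩ : Fin K) : ℕ) = 0 := rfl
      have key : ∀ φ : Fin K, Ef K M none (fsel K M hM none φ, φ)
          = if φ = (⟨0,hK⟩ : Fin K) then (1:ℝ) else 0 := by
        intro φ
        by_cases h : φ.val = 0
        · have h' : φ = (⟨0,hK⟩ : Fin K) := Fin.ext h
          simp [Ef, fsel, h, h']
        · have h' : ¬ φ = (⟨0,hK⟩ : Fin K) := fun e => h (by rw [e])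
          simp [Ef, fsel, h, h']
      rw [Finset.sum_congr rfl (fun φ _ => key φ)]
      simp [Finset.sum_ite_eq']
  | none, some s =>
      by_cases hzs : s.1 = (⟨0,hK⟩ : Fin K)
      · have hs0 : s.1.val = 0 := by rw [hzs]
        have key : ∀ φ : Fin K, Ef K M none (fsel K M hM (some s) φ, φ) = 0 := by
          intro φ
          by_cases h : φ = s.1
          · subst h
            simp [Ef, fsel, LFTemb, hs0]
          · have h' : ¬ φ.val = 0 := fun e => h (by rw [hzs]; exact Fin.ext e)
            simp [Ef, fsel, h, h']
        rw [Finset.sum_congr rfl (fun φ _ => key φ)]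
        simp
      · have key : ∀ φ : Fin K, Ef K M none (fsel K M hM (some s) φ, φ)
            = (if φ = (⟨0,hK⟩ : Fin K) then (1:ℝ) else 0) - (if φ = s.1 then 1 else 0) := by
          intro φ
          by_cases h1 : φ = s.1 <;> by_cases h2 : φ = (⟨0,hK⟩ : Fin K)
          · exact absurd (h1 ▸ h2) hzs
          · subst h1
            have : s.1.val ≠ 0 := by
              intro h; exact hzs (Fin.ext h)
            simp [Ef, fsel, LFTemb, this, h2]
          · subst h2
            simp [Ef, fsel, h1, Fin.ext_iff]
          · have : φ.val ≠ 0 := by intro h; exact h2 (Fin.ext h)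
            simp [Ef, fsel, h1, this, Fin.ext_iff]
        rw [Finset.sum_congr rfl (fun φ _ => key φ), Finset.sum_sub_distrib]
        simp [Finset.sum_ite_eq']
  | some s, none =>
      have hne := (emb_ne_zero M hM s.2).symm
      have key : ∀ φ : Fin K, Ef K M (some s) (fsel K M hM none φ, φ) = 0 := by
        intro φ; simp [Ef, fsel, hne]
      rw [Finset.sum_congr rfl (fun φ _ => key φ)]
      simp
  | some s, some s' =>
      have key : ∀ φ : Fin K, Ef K M (some s) (fsel K M hM (some s') φ, φ)
          = if φ = s.1 ∧ s = s' then (1:ℝ) else 0 := by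
        intro φ
        by_cases h1 : φ = s.1
        · subst h1
          by_cases h2 : s.1 = s'.1
          · by_cases h3 : s.2 = s'.2
            · have : s = s' := Prod.ext h2 h3
              simp [Ef, fsel, h2, h3, this]
            · have hss : s ≠ s' := fun h => h3 (congrArg Prod.snd h)
              have : LFTemb M s'.2 ≠ LFTemb M s.2 := by
                intro h; apply h3; have := congrArg Fin.val h
                simp [LFTemb] at this; exact (Fin.ext this).symm
              simp [Ef, fsel, h2, hss, this]
          · have hss : s ≠ s' := fun h => h2 (congrArg Prod.fst h)
            have h4 : ¬ (s.1 = s'.1) := h2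
            simp [Ef, fsel, h4, hss, (emb_ne_zero M hM s.2).symm]
        · simp [Ef, fsel, h1]
      rw [Finset.sum_congr rfl (fun φ _ => key φ)]
      by_cases hss : s = s'
      · simp only [hss, and_true]
        simp [Finset.sum_ite_eq']
      · simp [hss]

lemma sum_pi_prod {n : ℕ} {γ : Fin n → Type*} [∀ i, Fintype (γ i)] [∀ i, DecidableEq (γ i)]
    (g : ∀ i, γ i → ℝ) :
    ∑ x : (∀ i, γ i), ∏ i, g i (x i) = ∏ i, ∑ y : γ i, g i y := by
  rw [← Fintype.piFinset_univ, ← Finset.prod_univ_sum]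

section Global

variable (n : ℕ) (k m : Fin n → ℕ)

lemma LFT_h1 (hk : ∀ i, 1 ≤ k i) (hm : ∀ i, 1 ≤ m i) :
    (Matrix.of (fun (p : (∀ i, Fin (m i)) × (∀ i, Fin (k i)))
        (t : ∀ i, Option (Fin (k i) × Fin (m i - 1))) =>
        ∏ i, Cf (k i) (m i) (p.1 i, p.2 i) (t i)))
    * (Matrix.of (fun (t : ∀ i, Option (Fin (k i) × Fin (m i - 1)))
        (L : ∀ i, Fin (k i) → Fin (m i)) => ∏ i, Df (k i) (m i) (t i) (L i)))
    = Matrix.of (fun p L => if ∀ i, L i (p.2 i) = p.1 i then (1 : ℝ) else 0) := by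
  ext p L
  rw [Matrix.mul_apply]
  simp only [Matrix.of_apply]
  calc ∑ t : (∀ i, Option (Fin (k i) × Fin (m i - 1))),
        (∏ i, Cf (k i) (m i) (p.1 i, p.2 i) (t i)) * ∏ i, Df (k i) (m i) (t i) (L i)
      = ∑ t : (∀ i, Option (Fin (k i) × Fin (m i - 1))),
          ∏ i, (Cf (k i) (m i) (p.1 i, p.2 i) (t i) * Df (k i) (m i) (t i) (L i)) :=
        Finset.sum_congr rfl (fun t _ => Finset.prod_mul_distrib.symm)
    _ = ∏ i, ∑ s : Option (Fin (k i) × Fin (m i - 1)),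
          (Cf (k i) (m i) (p.1 i, p.2 i) s * Df (k i) (m i) s (L i)) :=
        sum_pi_prod (fun i s => Cf (k i) (m i) (p.1 i, p.2 i) s * Df (k i) (m i) s (L i))
    _ = ∏ i, (if L i (p.2 i) = p.1 i then (1:ℝ) else 0) :=
        Finset.prod_congr rfl (fun i _ => CD (k i) (m i) (p.1 i, p.2 i) (L i))
    _ = if ∀ i, L i (p.2 i) = p.1 i then (1:ℝ) else 0 := by
        rw [Fintype.prod_boole]; congr

lemma LFT_h2 (hk : ∀ i, 1 ≤ k i) (hm : ∀ i, 1 ≤ m i) :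
    (Matrix.of (fun (p : (∀ i, Fin (m i)) × (∀ i, Fin (k i)))
        (L : ∀ i, Fin (k i) → Fin (m i)) =>
        if ∀ i, L i (p.2 i) = p.1 i then (1 : ℝ) else 0))
    * (Matrix.of (fun (L : ∀ i, Fin (k i) → Fin (m i))
        (t : ∀ i, Option (Fin (k i) × Fin (m i - 1))) =>
        ∏ i, Ff (k i) (m i) (hm i) (L i) (t i)))
    = Matrix.of (fun p (u : ∀ i, Option (Fin (k i) × Fin (m i - 1))) =>
        ∏ i, (if fsel (k i) (m i) (hm i) (u i) (p.2 i) = p.1 i then (1:ℝ) else 0)) := by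
  ext p u
  rw [Matrix.mul_apply]
  simp only [Matrix.of_apply]
  calc ∑ L : (∀ i, Fin (k i) → Fin (m i)),
        (if ∀ i, L i (p.2 i) = p.1 i then (1:ℝ) else 0) * ∏ i, Ff (k i) (m i) (hm i) (L i) (u i)
      = ∑ L : (∀ i, Fin (k i) → Fin (m i)),
          ∏ i, ((if L i (p.2 i) = p.1 i then (1:ℝ) else 0)
            * Ff (k i) (m i) (hm i) (L i) (u i)) := by
        refine Finset.sum_congr rfl (fun L _ => ?_)
        have e : (if ∀ i, L i (p.2 i) = p.1 i then (1:ℝ) else 0)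
            = ∏ i, (if L i (p.2 i) = p.1 i then (1:ℝ) else 0) := by
          rw [Fintype.prod_boole]; congr
        rw [e]
        exact Finset.prod_mul_distrib.symm
    _ = ∏ i, ∑ f : Fin (k i) → Fin (m i),
          ((if f (p.2 i) = p.1 i then (1:ℝ) else 0) * Ff (k i) (m i) (hm i) f (u i)) :=
        sum_pi_prod (fun i f =>
          (if f (p.2 i) = p.1 i then (1:ℝ) else 0) * Ff (k i) (m i) (hm i) f (u i))
    _ = ∏ i, (if fsel (k i) (m i) (hm i) (u i) (p.2 i) = p.1 i then (1:ℝ) else 0) :=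
        Finset.prod_congr rfl (fun i _ => AF (k i) (m i) (hm i) (p.1 i, p.2 i) (u i))

lemma LFT_h3 (hk : ∀ i, 1 ≤ k i) (hm : ∀ i, 1 ≤ m i) :
    (Matrix.of (fun (t : ∀ i, Option (Fin (k i) × Fin (m i - 1)))
        (p : (∀ i, Fin (m i)) × (∀ i, Fin (k i))) =>
        ∏ i, Ef (k i) (m i) (t i) (p.1 i, p.2 i)))
    * (Matrix.of (fun (p : (∀ i, Fin (m i)) × (∀ i, Fin (k i)))
        (u : ∀ i, Option (Fin (k i) × Fin (m i - 1))) =>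
        ∏ i, (if fsel (k i) (m i) (hm i) (u i) (p.2 i) = p.1 i then (1:ℝ) else 0)))
    = 1 := by
  ext t u
  rw [Matrix.mul_apply, Fintype.sum_prod_type]
  simp only [Matrix.of_apply]
  calc ∑ x : (∀ i, Fin (m i)), ∑ y : (∀ i, Fin (k i)),
        (∏ i, Ef (k i) (m i) (t i) (x i, y i))
          * ∏ i, (if fsel (k i) (m i) (hm i) (u i) (y i) = x i then (1:ℝ) else 0)
      = ∑ x : (∀ i, Fin (m i)), ∑ y : (∀ i, Fin (k i)),
          ∏ i, (Ef (k i) (m i) (t i) (x i, y i)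
            * (if fsel (k i) (m i) (hm i) (u i) (y i) = x i then (1:ℝ) else 0)) :=
        Finset.sum_congr rfl (fun x _ => Finset.sum_congr rfl
          (fun y _ => Finset.prod_mul_distrib.symm))
    _ = ∑ x : (∀ i, Fin (m i)), ∏ i, ∑ b : Fin (k i),
          (Ef (k i) (m i) (t i) (x i, b)
            * (if fsel (k i) (m i) (hm i) (u i) b = x i then (1:ℝ) else 0)) :=
        Finset.sum_congr rfl (fun x _ => sum_pi_prod
          (fun i b => Ef (k i) (m i) (t i) (x i, b)
            * (if fsel (k i) (m i) (hm i) (u i) b = x i then (1:ℝ) else 0)))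
    _ = ∏ i, ∑ a : Fin (m i), ∑ b : Fin (k i),
          (Ef (k i) (m i) (t i) (a, b)
            * (if fsel (k i) (m i) (hm i) (u i) b = a then (1:ℝ) else 0)) :=
        sum_pi_prod (fun i a => ∑ b : Fin (k i),
          (Ef (k i) (m i) (t i) (a, b)
            * (if fsel (k i) (m i) (hm i) (u i) b = a then (1:ℝ) else 0)))
    _ = ∏ i, (if t i = u i then (1:ℝ) else 0) :=
        Finset.prod_congr rfl (fun i _ => EAF (k i) (m i) (hk i) (hm i) (t i) (u i))
    _ = (1 : Matrix (∀ i, Option (Fin (k i) × Fin (m i - 1)))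
          (∀ i, Option (Fin (k i) × Fin (m i - 1))) ℝ) t u := by
        rw [Fintype.prod_boole, Matrix.one_apply]
        by_cases h : t = u
        · subst h; simp
        · have h' : ¬ ∀ i, t i = u i := fun hh => h (funext hh)
          simp [h, h']

end Global

/-- The rank of the Boolean matrix `M` of the Linear Feasibility Test, for the complete
set of treatments, equals `∏ i, (k i * (m i − 1) + 1)`. -/
theorem rank_LFT_matrix
    (n : ℕ) (hn : 1 ≤ n) (k m : Fin n → ℕ)
    (hk : ∀ i, 1 ≤ k i) (hm : ∀ i, 1 ≤ m i) :
    (Matrix.of (fun (p : (∀ i, Fin (m i)) × (∀ i, Fin (k i)))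
        (L : ∀ i, Fin (k i) → Fin (m i)) =>
        if ∀ i, L i (p.2 i) = p.1 i then (1 : ℝ) else 0)).rank =
      ∏ i, (k i * (m i - 1) + 1) := by
  classical
  have hcard : Fintype.card (∀ i, Option (Fin (k i) × Fin (m i - 1)))
      = ∏ i, (k i * (m i - 1) + 1) := by
    simp [Fintype.card_pi]
  apply le_antisymm
  · rw [← LFT_h1 n k m hk hm]
    exact (Matrix.rank_mul_le_left _ _).trans
      ((Matrix.rank_le_card_width _).trans_eq hcard)
  · calc ∏ i, (k i * (m i - 1) + 1)
        = Fintype.card (∀ i, Option (Fin (k i) × Fin (m i - 1))) := hcard.symm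
      _ = (1 : Matrix (∀ i, Option (Fin (k i) × Fin (m i - 1)))
            (∀ i, Option (Fin (k i) × Fin (m i - 1))) ℝ).rank := Matrix.rank_one.symm
      _ ≤ (Matrix.of (fun (p : (∀ i, Fin (m i)) × (∀ i, Fin (k i)))
            (L : ∀ i, Fin (k i) → Fin (m i)) =>
            if ∀ i, L i (p.2 i) = p.1 i then (1 : ℝ) else 0)).rank := by
          rw [← LFT_h3 n k m hk hm]
          exact (Matrix.rank_mul_le_right _ _).trans
            (by rw [← LFT_h2 n k m hk hm]; exact Matrix.rank_mul_le_left _ _)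
end

section
/- For every subset S ⊆ Fin n, every j ∈ Π i : S, Fin (k i), every l̄ ∈ Π i : S, Fin (m i), and every treatment φ ∈ Π i, Fin (k i) with φ i = j i for all i ∈ S, the sum over all l ∈ Π i, Fin (m i) with l i = l̄ i for all i ∈ S of the row of M indexed by (l, φ) equals the vector V (S, j, l̄). In particular, this sum of rows is the same for any two treatments that agree with j on S, regardless of their values outside S. -/
/-- For any subset `S` of the factors, any assignment `j` of factor points and `l̄` of
output values on `S`, and any treatment `φ` agreeing with `j` on `S`, the sum of the rows
of `M` indexed by `(l, φ)` with `l` agreeing with `l̄` on `S` equals the vector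
`V (S, j, l̄)` (in particular it does not depend on the values of `φ` outside `S`). -/
theorem sum_rows_eq_V
    (n : ℕ) (hn : 1 ≤ n) (k m : Fin n → ℕ)
    (hk : ∀ i, 1 ≤ k i) (hm : ∀ i, 1 ≤ m i)
    (S : Finset (Fin n)) (j : ∀ i : S, Fin (k i.1)) (lbar : ∀ i : S, Fin (m i.1))
    (φ : ∀ i, Fin (k i)) (hφ : ∀ i : S, φ i.1 = j i) :
    (fun (L : ∀ i, Fin (k i) → Fin (m i)) =>
        ∑ l ∈ Finset.univ.filter (fun l : ∀ i, Fin (m i) => ∀ i : S, l i.1 = lbar i),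
          (if ∀ i, L i (φ i) = l i then (1 : ℝ) else 0)) =
      (fun (L : ∀ i, Fin (k i) → Fin (m i)) =>
        if ∀ i : S, L i.1 (j i) = lbar i then (1 : ℝ) else 0) := by
  funext L
  have key : ∀ l : ∀ i, Fin (m i), (∀ i, L i (φ i) = l i) ↔ l = fun i => L i (φ i) := by
    intro l
    constructor
    · intro h; funext i; exact (h i).symm
    · intro h i; rw [h]
  simp only [key]
  rw [Finset.sum_ite_eq' _ (fun i => L i (φ i)) (fun _ => (1 : ℝ))]
  simp only [Finset.mem_filter, Finset.mem_univ, true_and]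
  congr 1
  apply propext
  constructor
  · intro h i; have := h i; rwa [hφ i] at this
  · intro h i; rw [hφ i]; exact h i
end

section
/- If the set of treatments T contains at least two elements, then the rows of M indexed by pairs (l, φ) with φ ∈ T are linearly dependent over ℝ; equivalently, the rank of the submatrix of M consisting of these rows is strictly smaller than the number of rows, |T| · ∏ i, m i. -/
/-- If the set of treatments `T` contains at least two elements, then the rows of `M`
indexed by pairs `(l, φ)` with `φ ∈ T` are linearly dependent over `ℝ`. -/
theorem rows_of_M_linearly_dependent
    (n : ℕ) (hn : 1 ≤ n) (k m : Fin n → ℕ)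
    (hk : ∀ i, 1 ≤ k i) (hm : ∀ i, 1 ≤ m i)
    (T : Set (∀ i, Fin (k i))) (hT : T.Nonempty)
    (hT2 : ∃ φ₁ ∈ T, ∃ φ₂ ∈ T, φ₁ ≠ φ₂) :
    ¬ LinearIndependent ℝ
      (fun (p : (∀ i, Fin (m i)) × T) =>
        (fun (L : ∀ i, Fin (k i) → Fin (m i)) =>
          if ∀ i, L i ((p.2 : ∀ i, Fin (k i)) i) = p.1 i then (1 : ℝ) else 0)) := by
  classical
  obtain ⟨φ₁, h₁, φ₂, h₂, hne⟩ := hT2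
  have : Fintype T := (Set.toFinite T).fintype
  set a : T := ⟨φ₁, h₁⟩
  set b : T := ⟨φ₂, h₂⟩
  have hab : a ≠ b := fun h => hne (congrArg Subtype.val h)
  intro h
  rw [Fintype.linearIndependent_iff] at h
  set g : (∀ i, Fin (m i)) × T → ℝ :=
    fun p => (if p.2 = a then 1 else 0) + (if p.2 = b then -1 else 0) with hg
  have key : ∀ (φ : T) (L : ∀ i, Fin (k i) → Fin (m i)),
      (∑ l : ∀ i, Fin (m i),
        (if ∀ i, L i ((φ : ∀ i, Fin (k i)) i) = l i then (1 : ℝ) else 0)) = 1 := by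
    intro φ L
    have : ∀ l : ∀ i, Fin (m i),
        (∀ i, L i ((φ : ∀ i, Fin (k i)) i) = l i) ↔ l = fun i => L i ((φ : ∀ i, Fin (k i)) i) := by
      intro l
      constructor
      · intro h'; exact (funext h').symm
      · intro h'; intro i; rw [h']
    simp only [this]
    simp
  have hsum : (∑ p : (∀ i, Fin (m i)) × T, g p •
      (fun (L : ∀ i, Fin (k i) → Fin (m i)) =>
        if ∀ i, L i ((p.2 : ∀ i, Fin (k i)) i) = p.1 i then (1 : ℝ) else 0)) = 0 := by
    funext L
    simp only [Finset.sum_apply, Pi.smul_apply, smul_eq_mul, Pi.zero_apply]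
    rw [Fintype.sum_prod_type_right]
    have : ∀ φ : T,
        (∑ l : ∀ i, Fin (m i), g (l, φ) *
          (if ∀ i, L i ((φ : ∀ i, Fin (k i)) i) = l i then (1 : ℝ) else 0)) =
        (if φ = a then 1 else 0) + (if φ = b then -1 else 0) := by
      intro φ
      have hgc : ∀ l : ∀ i, Fin (m i), g (l, φ) =
          (if φ = a then 1 else 0) + (if φ = b then -1 else 0) := fun l => rfl
      simp only [hgc]
      rw [← Finset.mul_sum, key φ L, mul_one]
    rw [Finset.sum_congr rfl (fun φ _ => this φ)]
    rw [Finset.sum_add_distrib]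
    simp [Finset.sum_ite_eq', hab]
  have := h g hsum (⟨fun i => ⟨0, hm i⟩, a⟩)
  simp [hg, hab] at this
end

section
/- The family of vectors V (S, j, l), indexed by all triples (S, j, l) with S ⊆ Fin n, j ∈ Π i : S, Fin (k i), and l ∈ Π i : S, Fin (m i) satisfying l i ≠ 0 for every i ∈ S (i.e., l avoids a fixed base value of each variable), is linearly independent in the vector space ℝ^(Π i, (Fin (k i) → Fin (m i))). (These vectors form the rows of the full-row-rank matrix M*.) -/
open Finset

private theorem alt_sum' {n : ℕ} (S S' : Finset (Fin n)) (hS' : S' ⊆ S) :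
    ∑ T ∈ S.powerset, (if S' ⊆ T then ((-1:ℝ)^(S.card - T.card)) else 0)
      = if S' = S then 1 else 0 := by
  classical
  rw [Finset.sum_ite, Finset.sum_const_zero, add_zero]
  have himg : S.powerset.filter (fun T => S' ⊆ T) = (S \ S').powerset.image (fun U => S' ∪ U) := by
    ext T
    simp only [mem_filter, mem_powerset, mem_image]
    constructor
    · rintro ⟨hTS, hST⟩
      exact ⟨T \ S', by simp [Finset.sdiff_subset_sdiff hTS (le_refl S')],
        by rw [Finset.union_sdiff_of_subset hST]⟩
    · rintro ⟨U, hU, rfl⟩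
      exact ⟨Finset.union_subset hS' (hU.trans (Finset.sdiff_subset)), Finset.subset_union_left⟩
  rw [himg, Finset.sum_image]
  · have hdisj : ∀ U ∈ (S \ S').powerset, Disjoint S' U := by
      intro U hU
      rw [mem_powerset] at hU
      exact Finset.disjoint_of_subset_right hU (Finset.disjoint_sdiff)
    have hcard : ∀ U ∈ (S \ S').powerset, S.card - (S' ∪ U).card = (S \ S').card - U.card := by
      intro U hU
      rw [Finset.card_union_of_disjoint (hdisj U hU), Finset.card_sdiff_of_subset hS']
      omega
    rw [Finset.sum_congr rfl (fun U hU => by rw [hcard U hU])]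
    have hpow : ∀ U ∈ (S \ S').powerset, ((-1:ℝ))^((S \ S').card - U.card)
        = (-1)^((S\S').card) * (-1)^U.card := by
      intro U hU
      rw [mem_powerset] at hU
      have hle : U.card ≤ (S \ S').card := card_le_card hU
      have h2 : ((-1:ℝ))^U.card * (-1)^U.card = 1 := by
        rw [← pow_add]; exact Even.neg_one_pow ⟨U.card, rfl⟩
      calc ((-1:ℝ))^((S \ S').card - U.card)
          = ((-1:ℝ))^((S \ S').card - U.card) * ((-1)^U.card * (-1)^U.card) := by rw [h2, mul_one]
        _ = (((-1:ℝ))^(((S \ S').card - U.card) + U.card)) * (-1)^U.card := by rw [pow_add]; ring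
        _ = (-1)^((S\S').card) * (-1)^U.card := by rw [Nat.sub_add_cancel hle]
    rw [Finset.sum_congr rfl hpow, ← Finset.mul_sum]
    have hz := @Finset.sum_powerset_neg_one_pow_card (Fin n) _ (S \ S')
    have hsum : (∑ U ∈ (S \ S').powerset, ((-1:ℝ))^U.card) = if S \ S' = ∅ then 1 else 0 := by
      calc (∑ U ∈ (S \ S').powerset, ((-1:ℝ))^U.card)
          = ((∑ U ∈ (S \ S').powerset, (-1:ℤ)^U.card : ℤ) : ℝ) := by push_cast; rfl
        _ = _ := by rw [hz]; split <;> norm_num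
    rw [hsum]
    by_cases h : S' = S
    · subst h; simp
    · have hne : S \ S' ≠ ∅ := by
        rw [← Finset.nonempty_iff_ne_empty, Finset.sdiff_nonempty]
        intro hSS'
        exact h (Finset.Subset.antisymm hS' hSS')
      simp [hne, h]
  · intro U1 h1 U2 h2 he
    have h1' : U1 ⊆ S \ S' := by exact Finset.mem_powerset.mp (Finset.mem_coe.mp h1)
    have h2' : U2 ⊆ S \ S' := by exact Finset.mem_powerset.mp (Finset.mem_coe.mp h2)
    have d1 := Finset.disjoint_of_subset_right h1' (Finset.disjoint_sdiff (s := S') (t := S))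
    have d2 := Finset.disjoint_of_subset_right h2' (Finset.disjoint_sdiff (s := S') (t := S))
    have h3 : (S' ∪ U1) \ S' = (S' ∪ U2) \ S' := by exact congrArg (fun X => X \ S') he
    rwa [Finset.union_sdiff_cancel_left d1, Finset.union_sdiff_cancel_left d2] at h3

set_option maxHeartbeats 1000000
set_option synthInstance.maxHeartbeats 400000

/-- The family of vectors `V (S, j, l)`, over all subsets `S` of the factors, assignments
`j` of factor points on `S`, and assignments `l` of nonzero output values on `S`, is
linearly independent (these are the rows of the full-row-rank matrix `M*`). -/
theorem V_family_linearly_independent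
    (n : ℕ) (hn : 1 ≤ n) (k m : Fin n → ℕ)
    (hk : ∀ i, 1 ≤ k i) [∀ i, NeZero (m i)] :
    LinearIndependent ℝ
      (fun (t : Σ S : Finset (Fin n),
          (∀ i : S, Fin (k i.1)) × (∀ i : S, {v : Fin (m i.1) // v ≠ 0})) =>
        (fun (L : ∀ i, Fin (k i) → Fin (m i)) =>
          if ∀ i : t.1, L i.1 (t.2.1 i) = (t.2.2 i).1 then (1 : ℝ) else 0)) := by
  classical
  rw [Fintype.linearIndependent_iff]
  intro c hc
  have hc' : ∀ L : ∀ i, Fin (k i) → Fin (m i),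
      (∑ t : Σ S : Finset (Fin n),
          (∀ i : S, Fin (k i.1)) × (∀ i : S, {v : Fin (m i.1) // v ≠ 0}),
        c t * (if ∀ i : t.1, L i.1 (t.2.1 i) = (t.2.2 i).1 then (1:ℝ) else 0)) = 0 := by
    intro L
    have h := congrFun hc L
    simpa [Finset.sum_apply] using h
  rintro ⟨S, j, l⟩
  -- evaluation points
  set LT : Finset (Fin n) → ∀ i, Fin (k i) → Fin (m i) := fun T i a =>
    if hS : i ∈ S then (if i ∈ T ∧ a = j ⟨i, hS⟩ then (l ⟨i, hS⟩).1 else 0) else 0 with hLT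
  -- evaluation of a vector at LT T
  have hVeval : ∀ (t : Σ S : Finset (Fin n),
        (∀ i : S, Fin (k i.1)) × (∀ i : S, {v : Fin (m i.1) // v ≠ 0}))
      (T : Finset (Fin n)),
      (if ∀ i : t.1, LT T i.1 (t.2.1 i) = (t.2.2 i).1 then (1:ℝ) else 0)
        = if (∀ i : t.1, ∃ hS : i.1 ∈ S,
            i.1 ∈ T ∧ t.2.1 i = j ⟨i.1, hS⟩ ∧ (t.2.2 i).1 = (l ⟨i.1, hS⟩).1) then 1 else 0 := by
    intro t T
    refine if_congr ⟨?_, ?_⟩ rfl rfl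
    · intro h i
      have hi := h i
      simp only [hLT] at hi
      by_cases hS : i.1 ∈ S
      · rw [dif_pos hS] at hi
        by_cases hcond : i.1 ∈ T ∧ t.2.1 i = j ⟨i.1, hS⟩
        · rw [if_pos hcond] at hi
          exact ⟨hS, hcond.1, hcond.2, hi.symm⟩
        · rw [if_neg hcond] at hi
          exact absurd hi.symm (t.2.2 i).2
      · rw [dif_neg hS] at hi
        exact absurd hi.symm (t.2.2 i).2
    · intro h i
      obtain ⟨hS, hT, hj, hl⟩ := h i
      simp only [hLT]
      rw [dif_pos hS, if_pos ⟨hT, hj⟩, hl]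
  -- the key computation
  have key : ∀ t : Σ S : Finset (Fin n),
        (∀ i : S, Fin (k i.1)) × (∀ i : S, {v : Fin (m i.1) // v ≠ 0}),
      ∑ T ∈ S.powerset, (-1:ℝ)^(S.card - T.card)
          * (if ∀ i : t.1, LT T i.1 (t.2.1 i) = (t.2.2 i).1 then (1:ℝ) else 0)
        = if t = ⟨S, j, l⟩ then 1 else 0 := by
    rintro ⟨S', j', l'⟩
    simp only [hVeval ⟨S', j', l'⟩]
    by_cases hQ : ∀ i : S', ∃ hS : i.1 ∈ S,
        j' i = j ⟨i.1, hS⟩ ∧ (l' i).1 = (l ⟨i.1, hS⟩).1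
    · have hsub : S' ⊆ S := fun i hi => (hQ ⟨i, hi⟩).choose
      have hstep : ∀ T ∈ S.powerset, ((-1:ℝ)^(S.card - T.card)
            * (if (∀ i : S', ∃ hS : i.1 ∈ S,
                i.1 ∈ T ∧ j' i = j ⟨i.1, hS⟩ ∧ (l' i).1 = (l ⟨i.1, hS⟩).1) then (1:ℝ) else 0))
          = (if S' ⊆ T then (-1:ℝ)^(S.card - T.card) else 0) := by
        intro T _
        by_cases hsubT : S' ⊆ T
        · rw [if_pos hsubT, if_pos, mul_one]
          intro i
          obtain ⟨hS, hj, hl⟩ := hQ i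
          exact ⟨hS, hsubT i.2, hj, hl⟩
        · rw [if_neg hsubT, if_neg, mul_zero]
          intro hP
          refine hsubT (fun i hi => ?_)
          obtain ⟨_, hT', _⟩ := hP ⟨i, hi⟩
          exact hT'
      rw [Finset.sum_congr rfl hstep, alt_sum' S S' hsub]
      by_cases hSeq : S' = S
      · subst hSeq
        rw [if_pos rfl, if_pos]
        have hj' : j' = j := by
          funext i
          obtain ⟨hS, hj, _⟩ := hQ i
          exact hj
        have hl' : l' = l := by
          funext i
          obtain ⟨hS, _, hl⟩ := hQ i
          exact Subtype.ext hl
        rw [hj', hl']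
      · rw [if_neg hSeq, if_neg]
        intro heq
        exact hSeq (congrArg Sigma.fst heq)
    · have h1 : ∀ T ∈ S.powerset, ((-1:ℝ)^(S.card - T.card)
            * (if (∀ i : S', ∃ hS : i.1 ∈ S,
                i.1 ∈ T ∧ j' i = j ⟨i.1, hS⟩ ∧ (l' i).1 = (l ⟨i.1, hS⟩).1) then (1:ℝ) else 0)) = 0 := by
        intro T _
        rw [if_neg, mul_zero]
        intro hP
        refine hQ (fun i => ?_)
        obtain ⟨hS, _, hj, hl⟩ := hP i
        exact ⟨hS, hj, hl⟩
      rw [Finset.sum_congr rfl h1, Finset.sum_const_zero, if_neg]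
      intro heq
      rw [Sigma.mk.inj_iff] at heq
      obtain ⟨rfl, h2⟩ := heq
      obtain ⟨rfl, rfl⟩ : j' = j ∧ l' = l := by
        have h3 := eq_of_heq h2
        exact ⟨congrArg Prod.fst h3, congrArg Prod.snd h3⟩
      exact hQ (fun i => ⟨i.2, rfl, rfl⟩)
  -- assemble
  have h0 : ∑ T ∈ S.powerset, (-1:ℝ)^(S.card - T.card)
      * (∑ t : Σ S : Finset (Fin n),
          (∀ i : S, Fin (k i.1)) × (∀ i : S, {v : Fin (m i.1) // v ≠ 0}),
        c t * (if ∀ i : t.1, LT T i.1 (t.2.1 i) = (t.2.2 i).1 then (1:ℝ) else 0)) = 0 := by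
    rw [Finset.sum_congr rfl (fun T _ => by rw [hc' (LT T), mul_zero]), Finset.sum_const_zero]
  have h2 : (∑ t : Σ S : Finset (Fin n),
      (∀ i : S, Fin (k i.1)) × (∀ i : S, {v : Fin (m i.1) // v ≠ 0}),
      c t * (∑ T ∈ S.powerset, (-1:ℝ)^(S.card - T.card)
        * (if ∀ i : t.1, LT T i.1 (t.2.1 i) = (t.2.2 i).1 then (1:ℝ) else 0))) = 0 := by
    calc (∑ t : Σ S : Finset (Fin n),
        (∀ i : S, Fin (k i.1)) × (∀ i : S, {v : Fin (m i.1) // v ≠ 0}),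
        c t * (∑ T ∈ S.powerset, (-1:ℝ)^(S.card - T.card)
          * (if ∀ i : t.1, LT T i.1 (t.2.1 i) = (t.2.2 i).1 then (1:ℝ) else 0)))
        = ∑ t : Σ S : Finset (Fin n),
            (∀ i : S, Fin (k i.1)) × (∀ i : S, {v : Fin (m i.1) // v ≠ 0}),
            ∑ T ∈ S.powerset, c t * ((-1:ℝ)^(S.card - T.card)
              * (if ∀ i : t.1, LT T i.1 (t.2.1 i) = (t.2.2 i).1 then (1:ℝ) else 0)) :=
          Finset.sum_congr rfl fun t _ => Finset.mul_sum _ _ _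
      _ = ∑ T ∈ S.powerset, ∑ t : Σ S : Finset (Fin n),
            (∀ i : S, Fin (k i.1)) × (∀ i : S, {v : Fin (m i.1) // v ≠ 0}),
            c t * ((-1:ℝ)^(S.card - T.card)
              * (if ∀ i : t.1, LT T i.1 (t.2.1 i) = (t.2.2 i).1 then (1:ℝ) else 0)) :=
          Finset.sum_comm
      _ = ∑ T ∈ S.powerset, (-1:ℝ)^(S.card - T.card) * (∑ t : Σ S : Finset (Fin n),
            (∀ i : S, Fin (k i.1)) × (∀ i : S, {v : Fin (m i.1) // v ≠ 0}),
            c t * (if ∀ i : t.1, LT T i.1 (t.2.1 i) = (t.2.2 i).1 then (1:ℝ) else 0)) := by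
          refine Finset.sum_congr rfl fun T _ => ?_
          rw [Finset.mul_sum]
          exact Finset.sum_congr rfl fun t _ => by ring
      _ = 0 := h0
  simp_rw [key] at h2
  have h1 : (∑ t : Σ S : Finset (Fin n),
      (∀ i : S, Fin (k i.1)) × (∀ i : S, {v : Fin (m i.1) // v ≠ 0}),
      if t = (⟨S, j, l⟩ : Σ S : Finset (Fin n),
        (∀ i : S, Fin (k i.1)) × (∀ i : S, {v : Fin (m i.1) // v ≠ 0})) then c t else 0) = 0 := by
    refine Eq.trans ?_ h2
    exact Finset.sum_congr rfl fun t _ => by split <;> simp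
  rw [Finset.sum_ite_eq', if_pos (Finset.mem_univ _)] at h1
  exact h1
end

section
/- Every row of M (with rows ranging over all pairs (l, φ) ∈ (Π i, Fin (m i)) × (Π i, Fin (k i)), i.e., the complete design) lies in the ℝ-linear span of the set of vectors V (S, j, l) taken over all S ⊆ Fin n, j ∈ Π i : S, Fin (k i), and l ∈ Π i : S, Fin (m i) with l i ≠ 0 for every i ∈ S. Consequently, the rank of M is at most ∏ i, (k i * (m i − 1) + 1). -/
open Finset

lemma aux_span (n : ℕ) (k m : Fin n → ℕ) [∀ i, NeZero (m i)]
    (j : ∀ i, Fin (k i)) (T : Finset (Fin n)) (l : ∀ i, Fin (m i)) :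
    (fun (L : ∀ i, Fin (k i) → Fin (m i)) =>
        if ∀ i ∈ T, L i (j i) = l i then (1 : ℝ) else 0) ∈
      Submodule.span ℝ (Set.range
        (fun (t : Σ S : Finset (Fin n),
            (∀ i : S, Fin (k i.1)) × (∀ i : S, {v : Fin (m i.1) // v ≠ 0})) =>
          (fun (L : ∀ i, Fin (k i) → Fin (m i)) =>
            if ∀ i : t.1, L i.1 (t.2.1 i) = (t.2.2 i).1 then (1 : ℝ) else 0))) := by
  classical
  obtain ⟨N, hN⟩ : ∃ N, (T.filter fun i => l i = 0).card ≤ N := ⟨_, le_refl _⟩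
  induction N generalizing T l with
  | zero =>
    have hno : ∀ i ∈ T, l i ≠ 0 := by
      intro i hi h0
      have : i ∈ T.filter fun i => l i = 0 := Finset.mem_filter.mpr ⟨hi, h0⟩
      simpa [Finset.card_eq_zero.mp (Nat.le_zero.mp hN)] using this
    apply Submodule.subset_span
    refine ⟨⟨T, fun i => j i.1, fun i => ⟨l i.1, hno i.1 i.2⟩⟩, ?_⟩
    funext L
    simp only []
    congr 1
    simp [Subtype.forall]
  | succ N ih =>
    by_cases hz : ∃ a ∈ T, l a = 0
    · obtain ⟨a, haT, ha0⟩ := hz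
      have key : (fun (L : ∀ i, Fin (k i) → Fin (m i)) =>
          if ∀ i ∈ T, L i (j i) = l i then (1 : ℝ) else 0) =
          (fun L => if ∀ i ∈ T.erase a, L i (j i) = l i then (1 : ℝ) else 0) -
          ∑ v ∈ Finset.univ.filter (fun v : Fin (m a) => v ≠ 0),
            (fun L => if ∀ i ∈ T, L i (j i) = Function.update l a v i then (1 : ℝ) else 0) := by
        funext L
        simp only [Pi.sub_apply, Finset.sum_apply]
        by_cases hP : ∀ i ∈ T.erase a, L i (j i) = l i
        · have hT : ∀ v : Fin (m a), (∀ i ∈ T, L i (j i) = Function.update l a v i) ↔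
              L a (j a) = v := by
            intro v
            constructor
            · intro h
              simpa [Function.update_self] using h a haT
            · intro h i hi
              rcases eq_or_ne i a with rfl | hia
              · simpa [Function.update_self] using h
              · rw [Function.update_of_ne hia]
                exact hP i (Finset.mem_erase.mpr ⟨hia, hi⟩)
          have hTl : (∀ i ∈ T, L i (j i) = l i) ↔ L a (j a) = 0 := by
            constructor
            · intro h; rw [h a haT, ha0]
            · intro h i hi
              rcases eq_or_ne i a with rfl | hia
              · rw [h, ha0]
              · exact hP i (Finset.mem_erase.mpr ⟨hia, hi⟩)
          simp only [hT, hTl, if_pos hP]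
          by_cases h0 : L a (j a) = 0
          · rw [if_pos h0]
            rw [Finset.sum_eq_zero (fun v hv => ?_)]
            · ring
            · rw [if_neg]
              rw [h0]
              exact fun hc => (Finset.mem_filter.mp hv).2 hc.symm
          · rw [if_neg h0]
            rw [Finset.sum_eq_single (L a (j a))]
            · simp
            · intro v hv hvne
              exact if_neg (fun hc => hvne hc.symm)
            · intro hc
              exact absurd (Finset.mem_filter.mpr ⟨Finset.mem_univ (L a (j a)), h0⟩) hc
        · have h1 : ¬ (∀ i ∈ T, L i (j i) = l i) := fun h => hP fun i hi =>
            h i (Finset.mem_of_mem_erase hi)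
          have h2 : ∀ v ∈ Finset.univ.filter (fun v : Fin (m a) => v ≠ 0),
              (if ∀ i ∈ T, L i (j i) = Function.update l a v i then (1:ℝ) else 0) = 0 := by
            intro v hv
            rw [if_neg]
            intro h
            apply hP
            intro i hi
            obtain ⟨hia, hiT⟩ := Finset.mem_erase.mp hi
            rw [← Function.update_of_ne hia v l]
            exact h i hiT
          rw [if_neg h1, if_neg hP, Finset.sum_eq_zero h2]
          ring
      rw [key]
      have hcard : ((T.erase a).filter fun i => l i = 0).card ≤ N := by
        rw [Finset.filter_erase]
        have : a ∈ T.filter fun i => l i = 0 := Finset.mem_filter.mpr ⟨haT, ha0⟩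
        have h1 := Finset.card_erase_of_mem this
        omega
      refine Submodule.sub_mem _ (ih _ _ hcard) (Submodule.sum_mem _ fun v hv => ?_)
      apply ih
      have hset : (T.filter fun i => Function.update l a v i = 0) =
          (T.filter fun i => l i = 0).erase a := by
        ext i
        simp only [Finset.mem_filter, Finset.mem_erase]
        rcases eq_or_ne i a with rfl | hia
        · simp [Function.update_self, (Finset.mem_filter.mp hv).2]
        · simp [Function.update_of_ne hia, hia]
      rw [hset]
      have : a ∈ T.filter fun i => l i = 0 := Finset.mem_filter.mpr ⟨haT, ha0⟩
      have h1 := Finset.card_erase_of_mem this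
      omega
    · push_neg at hz
      have : (T.filter fun i => l i = 0).card ≤ N := by
        rw [Finset.filter_false_of_mem hz]
        simp
      exact ih T l this

/-- Every row of the matrix `M` (complete design) lies in the `ℝ`-linear span of the
vectors `V (S, j, l)` with `l` avoiding the base value `0` on `S`; consequently the rank
of `M` is at most `∏ i, (k i * (m i − 1) + 1)`. -/
theorem rows_of_M_in_span_of_V
    (n : ℕ) (hn : 1 ≤ n) (k m : Fin n → ℕ)
    (hk : ∀ i, 1 ≤ k i) [∀ i, NeZero (m i)] :
    (∀ (l : ∀ i, Fin (m i)) (φ : ∀ i, Fin (k i)),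
      (fun (L : ∀ i, Fin (k i) → Fin (m i)) =>
          if ∀ i, L i (φ i) = l i then (1 : ℝ) else 0) ∈
        Submodule.span ℝ (Set.range
          (fun (t : Σ S : Finset (Fin n),
              (∀ i : S, Fin (k i.1)) × (∀ i : S, {v : Fin (m i.1) // v ≠ 0})) =>
            (fun (L : ∀ i, Fin (k i) → Fin (m i)) =>
              if ∀ i : t.1, L i.1 (t.2.1 i) = (t.2.2 i).1 then (1 : ℝ) else 0)))) ∧
    (Matrix.of (fun (p : (∀ i, Fin (m i)) × (∀ i, Fin (k i)))
        (L : ∀ i, Fin (k i) → Fin (m i)) =>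
        if ∀ i, L i (p.2 i) = p.1 i then (1 : ℝ) else 0)).rank ≤
      ∏ i, (k i * (m i - 1) + 1) := by
  classical
  have part1 : ∀ (l : ∀ i, Fin (m i)) (φ : ∀ i, Fin (k i)),
      (fun (L : ∀ i, Fin (k i) → Fin (m i)) =>
          if ∀ i, L i (φ i) = l i then (1 : ℝ) else 0) ∈
        Submodule.span ℝ (Set.range
          (fun (t : Σ S : Finset (Fin n),
              (∀ i : S, Fin (k i.1)) × (∀ i : S, {v : Fin (m i.1) // v ≠ 0})) =>
            (fun (L : ∀ i, Fin (k i) → Fin (m i)) =>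
              if ∀ i : t.1, L i.1 (t.2.1 i) = (t.2.2 i).1 then (1 : ℝ) else 0))) := by
    intro l φ
    have := aux_span n k m φ Finset.univ l
    simpa using this
  refine ⟨part1, ?_⟩
  set V := (fun (t : Σ S : Finset (Fin n),
      (∀ i : S, Fin (k i.1)) × (∀ i : S, {v : Fin (m i.1) // v ≠ 0})) =>
    (fun (L : ∀ i, Fin (k i) → Fin (m i)) =>
      if ∀ i : t.1, L i.1 (t.2.1 i) = (t.2.2 i).1 then (1 : ℝ) else 0)) with hV
  rw [Matrix.rank_eq_finrank_span_row]
  have hle : Submodule.span ℝ (Set.range (Matrix.of (fun (p : (∀ i, Fin (m i)) × (∀ i, Fin (k i)))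
        (L : ∀ i, Fin (k i) → Fin (m i)) =>
        if ∀ i, L i (p.2 i) = p.1 i then (1 : ℝ) else 0))) ≤
      Submodule.span ℝ (Set.range V) := by
    rw [Submodule.span_le]
    rintro - ⟨p, rfl⟩
    exact part1 p.1 p.2
  have hcard2 : ∀ (i : Fin n), Fintype.card {v : Fin (m i) // v ≠ 0} = m i - 1 := by
    intro i
    rw [Fintype.card_subtype_compl, Fintype.card_subtype_eq, Fintype.card_fin]
  have hcard : Fintype.card (Σ S : Finset (Fin n),
      (∀ i : S, Fin (k i.1)) × (∀ i : S, {v : Fin (m i.1) // v ≠ 0})) =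
      ∏ i, (k i * (m i - 1) + 1) := by
    rw [Fintype.card_sigma]
    have hterm : ∀ S : Finset (Fin n),
        Fintype.card ((∀ i : S, Fin (k i.1)) × (∀ i : S, {v : Fin (m i.1) // v ≠ 0})) =
        ∏ i ∈ S, (k i * (m i - 1)) := by
      intro S
      rw [Fintype.card_prod, Fintype.card_pi, Fintype.card_pi]
      simp only [Fintype.card_fin, hcard2]
      rw [Finset.prod_coe_sort S (fun i => k i), Finset.prod_coe_sort S (fun i => m i - 1),
        ← Finset.prod_mul_distrib]
    simp only [hterm]
    have := Finset.prod_add (fun i => k i * (m i - 1)) (fun _ => 1) (Finset.univ : Finset (Fin n))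
    simp only [Finset.prod_const_one, mul_one, Finset.powerset_univ] at this
    rw [this]
  calc Module.finrank ℝ (Submodule.span ℝ (Set.range (Matrix.of
        (fun (p : (∀ i, Fin (m i)) × (∀ i, Fin (k i)))
          (L : ∀ i, Fin (k i) → Fin (m i)) =>
          if ∀ i, L i (p.2 i) = p.1 i then (1 : ℝ) else 0))))
      ≤ Module.finrank ℝ (Submodule.span ℝ (Set.range V)) := Submodule.finrank_mono hle
    _ ≤ Fintype.card (Σ S : Finset (Fin n),
        (∀ i : S, Fin (k i.1)) × (∀ i : S, {v : Fin (m i.1) // v ≠ 0})) :=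
        finrank_range_le_card V
    _ = ∏ i, (k i * (m i - 1) + 1) := hcard
end

section
/- Suppose T = Π i, Fin (k i) (complete design) and P satisfies complete marginal selectivity: for every subset S ⊆ Fin n, every v ∈ Π i : S, Fin (m i), and all treatments φ, φ′ with φ i = φ′ i for all i ∈ S, the sums ∑_{l : l i = v i for all i ∈ S} P φ l and ∑_{l : l i = v i for all i ∈ S} P φ′ l are equal. For each S ⊆ Fin n, j ∈ Π i : S, Fin (k i), and v ∈ Π i : S, Fin (m i) with v i ≠ 0 for all i ∈ S, let P* (S, j, v) := ∑_{l : l i = v i for all i ∈ S} P φ l for any treatment φ with φ i = j i on S (well-defined by marginal selectivity). Then for every Q : (Π i, (Fin (k i) → Fin (m i))) → ℝ with Q ≥ 0, the following are equivalent: (a) Q solves M Q = P; (b) for every such triple (S, j, v), ∑_{L : L i (j i) = v i for all i ∈ S} Q L = P* (S, j, v) (the reduced system M* Q = P*). -/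
open Finset

lemma marg_aux {α β : Type*} [Fintype α] [Fintype β] [DecidableEq β]
    (f : α → ℝ) (p : α → Prop) [DecidablePred p] (g : α → β) :
    ∑ a ∈ Finset.univ.filter p, f a =
      ∑ b : β, ∑ a ∈ Finset.univ.filter (fun a => p a ∧ g a = b), f a := by
  rw [← Finset.sum_fiberwise (Finset.univ.filter p) g f]
  congr 1
  ext b
  rw [Finset.filter_filter]

lemma cond_split {n : ℕ} {m : Fin n → ℕ} {α : Type*} [Fintype α]
    (f : α → ℝ) (G : α → ∀ i, Fin (m i)) (S : Finset (Fin n)) (i : Fin n)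
    (hi : i ∈ S) (w : ∀ i, Fin (m i)) :
    ∑ a ∈ Finset.univ.filter (fun a => ∀ j ∈ S.erase i, G a j = w j), f a =
      ∑ c : Fin (m i), ∑ a ∈ Finset.univ.filter
        (fun a => ∀ j ∈ S, G a j = Function.update w i c j), f a := by
  rw [marg_aux f _ (fun a => G a i)]
  congr 1
  ext c
  congr 1
  apply Finset.filter_congr
  intro a _
  constructor
  · rintro ⟨h1, h2⟩ j hj
    by_cases hji : j = i
    · subst hji; simpa using h2
    · rw [Function.update_of_ne hji]
      exact h1 j (Finset.mem_erase.mpr ⟨hji, hj⟩)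
  · intro h
    constructor
    · intro j hj
      have hji := (Finset.mem_erase.mp hj).1
      have := h j (Finset.mem_erase.mp hj).2
      rwa [Function.update_of_ne hji] at this
    · simpa using h i hi

lemma ext_all {n : ℕ} {m : Fin n → ℕ} [∀ i, NeZero (m i)]
    {α α' : Type*} [Fintype α] [Fintype α']
    (f : α → ℝ) (f' : α' → ℝ) (G : α → ∀ i, Fin (m i)) (G' : α' → ∀ i, Fin (m i))
    (hbase : ∀ (S : Finset (Fin n)) (w : ∀ i, Fin (m i)), (∀ i ∈ S, w i ≠ 0) →
      ∑ a ∈ Finset.univ.filter (fun a => ∀ j ∈ S, G a j = w j), f a =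
      ∑ a ∈ Finset.univ.filter (fun a => ∀ j ∈ S, G' a j = w j), f' a) :
    ∀ (S : Finset (Fin n)) (w : ∀ i, Fin (m i)),
      ∑ a ∈ Finset.univ.filter (fun a => ∀ j ∈ S, G a j = w j), f a =
      ∑ a ∈ Finset.univ.filter (fun a => ∀ j ∈ S, G' a j = w j), f' a := by
  suffices H : ∀ (N : ℕ) (S : Finset (Fin n)) (w : ∀ i, Fin (m i)),
      (S.filter fun i => w i = 0).card = N →
      ∑ a ∈ Finset.univ.filter (fun a => ∀ j ∈ S, G a j = w j), f a =
      ∑ a ∈ Finset.univ.filter (fun a => ∀ j ∈ S, G' a j = w j), f' a by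
    intro S w; exact H _ S w rfl
  intro N
  induction N with
  | zero =>
    intro S w hN
    apply hbase
    intro i hi hwi
    have : i ∈ S.filter fun i => w i = 0 := Finset.mem_filter.mpr ⟨hi, hwi⟩
    simp [Finset.card_eq_zero.mp hN] at this
  | succ N ih =>
    intro S w hN
    have hne : (S.filter fun i => w i = 0).Nonempty := by
      rw [← Finset.card_pos, hN]; omega
    obtain ⟨i, himem⟩ := hne
    obtain ⟨hi, hwi⟩ := Finset.mem_filter.mp himem
    -- the two split identities
    have h1 := cond_split f G S i hi w
    have h1' := cond_split f' G' S i hi w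
    -- filter set facts
    have hfe : ((S.erase i).filter fun j => w j = 0) = (S.filter fun j => w j = 0).erase i := by
      ext j
      simp only [Finset.mem_filter, Finset.mem_erase]
      tauto
    have hcard1 : ((S.erase i).filter fun j => w j = 0).card = N := by
      rw [hfe, Finset.card_erase_of_mem himem, hN]; omega
    have hcard2 : ∀ c : Fin (m i), c ≠ 0 →
        (S.filter fun j => Function.update w i c j = 0).card = N := by
      intro c hc
      have : (S.filter fun j => Function.update w i c j = 0)
          = (S.filter fun j => w j = 0).erase i := by
        ext j
        simp only [Finset.mem_filter, Finset.mem_erase]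
        by_cases hji : j = i
        · subst hji
          simp [Function.update_self, hc, hwi]
        · rw [Function.update_of_ne hji]
          tauto
      rw [this, Finset.card_erase_of_mem himem, hN]; omega
    have hupd0 : Function.update w i (0 : Fin (m i)) = w := by
      rw [← hwi]; exact Function.update_eq_self i w
    -- split off c = 0 in both sums
    rw [← Finset.add_sum_erase _ _ (Finset.mem_univ (0 : Fin (m i))), hupd0] at h1 h1'
    have herase := ih (S.erase i) w hcard1
    have hupds : ∑ c ∈ Finset.univ.erase (0 : Fin (m i)),
        ∑ a ∈ Finset.univ.filter (fun a => ∀ j ∈ S, G a j = Function.update w i c j), f a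
        = ∑ c ∈ Finset.univ.erase (0 : Fin (m i)),
        ∑ a ∈ Finset.univ.filter (fun a => ∀ j ∈ S, G' a j = Function.update w i c j), f' a := by
      apply Finset.sum_congr rfl
      intro c hc
      exact ih S (Function.update w i c) (hcard2 c (Finset.mem_erase.mp hc).1)
    have := h1.symm.trans (herase.trans h1')
    rw [hupds] at this
    linarith

lemma full_marg {n : ℕ} {k m : Fin n → ℕ}
    (P : (∀ i, Fin (k i)) → (∀ i, Fin (m i)) → ℝ)
    (Q : (∀ i, Fin (k i) → Fin (m i)) → ℝ) (φ : ∀ i, Fin (k i))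
    (hfull : ∀ l : ∀ i, Fin (m i),
      ∑ L ∈ Finset.univ.filter (fun L : ∀ i, Fin (k i) → Fin (m i) =>
          ∀ i, L i (φ i) = l i), Q L = P φ l)
    (S : Finset (Fin n)) (w : ∀ i, Fin (m i)) :
    ∑ L ∈ Finset.univ.filter (fun L : ∀ i, Fin (k i) → Fin (m i) =>
        ∀ j ∈ S, L j (φ j) = w j), Q L =
    ∑ l ∈ Finset.univ.filter (fun l : ∀ i, Fin (m i) => ∀ j ∈ S, l j = w j), P φ l := by
  rw [marg_aux Q _ (fun L => (fun i => L i (φ i) : ∀ i, Fin (m i)))]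
  conv_rhs => rw [Finset.sum_filter]
  apply Finset.sum_congr rfl
  intro l _
  by_cases hl : ∀ j ∈ S, l j = w j
  · rw [if_pos hl, ← hfull l]
    congr 1
    apply Finset.filter_congr
    intro L _
    constructor
    · rintro ⟨-, h2⟩ i
      exact congrFun h2 i
    · intro h
      exact ⟨fun j hj => by rw [h j]; exact hl j hj, funext h⟩
  · rw [if_neg hl]
    apply Finset.sum_eq_zero
    intro L hL
    obtain ⟨h1, h2⟩ := (Finset.mem_filter.mp hL).2
    exact absurd (fun j hj => (congrFun h2 j).symm.trans (h1 j hj)) hl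


/-- For the complete design and a `P` satisfying complete marginal selectivity, a
nonnegative `Q` solves the full system `M Q = P` iff it solves the reduced hierarchical
system `M* Q = P*` (where `P* (S, j, v)` is the marginal probability
`∑_{l : l = v on S} P φ l` for any treatment `φ` agreeing with `j` on `S`). -/
theorem full_system_iff_reduced_system
    (n : ℕ) (hn : 1 ≤ n) (k m : Fin n → ℕ)
    (hk : ∀ i, 1 ≤ k i) [∀ i, NeZero (m i)]
    (P : (∀ i, Fin (k i)) → (∀ i, Fin (m i)) → ℝ)
    (hMS : ∀ (S : Finset (Fin n)) (v : ∀ i : S, Fin (m i.1))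
        (φ φ' : ∀ i, Fin (k i)), (∀ i ∈ S, φ i = φ' i) →
      ∑ l ∈ Finset.univ.filter (fun l : ∀ i, Fin (m i) => ∀ i : S, l i.1 = v i), P φ l =
      ∑ l ∈ Finset.univ.filter (fun l : ∀ i, Fin (m i) => ∀ i : S, l i.1 = v i), P φ' l)
    (Q : (∀ i, Fin (k i) → Fin (m i)) → ℝ) (hQ : ∀ L, 0 ≤ Q L) :
    (∀ (φ : ∀ i, Fin (k i)) (l : ∀ i, Fin (m i)),
      ∑ L ∈ Finset.univ.filter (fun L : ∀ i, Fin (k i) → Fin (m i) =>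
          ∀ i, L i (φ i) = l i), Q L = P φ l) ↔
    (∀ (S : Finset (Fin n)) (j : ∀ i : S, Fin (k i.1)) (v : ∀ i : S, Fin (m i.1)),
      (∀ i : S, v i ≠ 0) →
      ∀ φ : ∀ i, Fin (k i), (∀ i : S, φ i.1 = j i) →
      ∑ L ∈ Finset.univ.filter (fun L : ∀ i, Fin (k i) → Fin (m i) =>
          ∀ i : S, L i.1 (j i) = v i), Q L =
      ∑ l ∈ Finset.univ.filter (fun l : ∀ i, Fin (m i) => ∀ i : S, l i.1 = v i), P φ l) := by
  constructor
  · -- full ⇒ reduced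
    intro hfull S j v hv φ hφ
    classical
    set w : ∀ i, Fin (m i) := fun i => if h : i ∈ S then v ⟨i, h⟩ else 0 with hw
    have hL : (Finset.univ.filter (fun L : ∀ i, Fin (k i) → Fin (m i) =>
          ∀ i : S, L i.1 (j i) = v i)) =
        (Finset.univ.filter (fun L : ∀ i, Fin (k i) → Fin (m i) =>
          ∀ i ∈ S, L i (φ i) = w i)) := by
      apply Finset.filter_congr
      intro L _
      simp only [Subtype.forall]
      constructor
      · intro h i hi
        rw [hφ ⟨i, hi⟩] at *
        simp only [hw, dif_pos hi]
        exact h i hi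
      · intro h i hi
        have := h i hi
        rw [hφ ⟨i, hi⟩] at this
        simpa only [hw, dif_pos hi] using this
    have hl : (Finset.univ.filter (fun l : ∀ i, Fin (m i) => ∀ i : S, l i.1 = v i)) =
        (Finset.univ.filter (fun l : ∀ i, Fin (m i) => ∀ i ∈ S, l i = w i)) := by
      apply Finset.filter_congr
      intro l _
      simp only [Subtype.forall]
      constructor
      · intro h i hi; simp only [hw, dif_pos hi]; exact h i hi
      · intro h i hi; simpa only [hw, dif_pos hi] using h i hi
    rw [hL, hl]
    exact full_marg P Q φ (hfull φ) S w
  · -- reduced ⇒ full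
    intro hred φ l
    classical
    have key := ext_all (m := m) Q (P φ)
      (fun L => (fun i => L i (φ i) : ∀ i, Fin (m i))) (fun l => l)
      (by
        intro S w hw
        have h1 : (Finset.univ.filter (fun L : ∀ i, Fin (k i) → Fin (m i) =>
              ∀ i : S, L i.1 ((fun i : S => φ i.1) i) = (fun i : S => w i.1) i)) =
            (Finset.univ.filter (fun L : ∀ i, Fin (k i) → Fin (m i) =>
              ∀ i ∈ S, L i (φ i) = w i)) := by
          apply Finset.filter_congr
          intro L _
          simp [Subtype.forall]
        have h2 : (Finset.univ.filter (fun l : ∀ i, Fin (m i) =>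
              ∀ i : S, l i.1 = (fun i : S => w i.1) i)) =
            (Finset.univ.filter (fun l : ∀ i, Fin (m i) => ∀ i ∈ S, l i = w i)) := by
          apply Finset.filter_congr
          intro l _
          simp [Subtype.forall]
        have := hred S (fun i : S => φ i.1) (fun i : S => w i.1)
          (fun i => hw i.1 i.2) φ (fun i => rfl)
        rwa [h1, h2] at this)
      Finset.univ l
    have hLfix : (Finset.univ.filter (fun L : ∀ i, Fin (k i) → Fin (m i) =>
          ∀ i, L i (φ i) = l i)) =
        (Finset.univ.filter (fun L : ∀ i, Fin (k i) → Fin (m i) =>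
          ∀ j ∈ Finset.univ, L j (φ j) = l j)) := by
      apply Finset.filter_congr
      intro L _
      simp
    have hlfix : (Finset.univ.filter (fun l' : ∀ i, Fin (m i) =>
          ∀ j ∈ Finset.univ, l' j = l j)) = {l} := by
      ext l'
      simp [funext_iff]
    rw [hLfix, key, hlfix, Finset.sum_singleton]
end

section
/- If Q : (Π i, (Fin (k i) → Fin (m i))) → ℝ solves the linear system M Q = P, then P satisfies marginal selectivity: for every subset S ⊆ Fin n, every v ∈ Π i : S, Fin (m i), and all treatments φ, φ′ ∈ T with φ i = φ′ i for every i ∈ S, ∑_{l : l i = v i for all i ∈ S} P φ l = ∑_{l : l i = v i for all i ∈ S} P φ′ l. In particular, the system M Q = P has no solution whenever P violates marginal selectivity. -/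
/-- If `Q` solves the linear system `M Q = P`, then `P` satisfies marginal selectivity;
in particular the system is infeasible whenever marginal selectivity is violated. -/
theorem marginal_selectivity_of_solution
    (n : ℕ) (hn : 1 ≤ n) (k m : Fin n → ℕ)
    (hk : ∀ i, 1 ≤ k i) (hm : ∀ i, 1 ≤ m i)
    (T : Set (∀ i, Fin (k i))) (hT : T.Nonempty)
    (P : (∀ i, Fin (k i)) → (∀ i, Fin (m i)) → ℝ)
    (Q : (∀ i, Fin (k i) → Fin (m i)) → ℝ)
    (hQP : ∀ φ ∈ T, ∀ l : ∀ i, Fin (m i),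
      ∑ L ∈ Finset.univ.filter (fun L : ∀ i, Fin (k i) → Fin (m i) =>
          ∀ i, L i (φ i) = l i), Q L = P φ l) :
    ∀ (S : Finset (Fin n)) (v : ∀ i : S, Fin (m i.1)),
      ∀ φ ∈ T, ∀ φ' ∈ T, (∀ i ∈ S, φ i = φ' i) →
      ∑ l ∈ Finset.univ.filter (fun l : ∀ i, Fin (m i) => ∀ i : S, l i.1 = v i), P φ l =
      ∑ l ∈ Finset.univ.filter (fun l : ∀ i, Fin (m i) => ∀ i : S, l i.1 = v i), P φ' l := by
  intro S v φ hφ φ' hφ' hfree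
  have key : ∀ ψ ∈ T,
      ∑ l ∈ Finset.univ.filter (fun l : ∀ i, Fin (m i) => ∀ i : S, l i.1 = v i), P ψ l =
      ∑ L ∈ Finset.univ.filter (fun L : ∀ i, Fin (k i) → Fin (m i) =>
          ∀ i : S, L i.1 (ψ i.1) = v i), Q L := by
    intro ψ hψ
    calc ∑ l ∈ Finset.univ.filter (fun l : ∀ i, Fin (m i) => ∀ i : S, l i.1 = v i), P ψ l
        = ∑ l ∈ Finset.univ.filter (fun l : ∀ i, Fin (m i) => ∀ i : S, l i.1 = v i),
            ∑ L ∈ Finset.univ.filter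
              (fun L : ∀ i, Fin (k i) → Fin (m i) => (fun i => L i (ψ i)) = l), Q L := by
          refine Finset.sum_congr rfl fun l hl => ?_
          rw [← hQP ψ hψ l]
          refine Finset.sum_congr ?_ (fun _ _ => rfl)
          apply Finset.filter_congr
          intro L _
          simp [funext_iff]
      _ = ∑ L ∈ Finset.univ.filter (fun L : ∀ i, Fin (k i) → Fin (m i) =>
            (fun i => L i (ψ i)) ∈ Finset.univ.filter
              (fun l : ∀ i, Fin (m i) => ∀ i : S, l i.1 = v i)), Q L :=
          Finset.sum_fiberwise_eq_sum_filter _ _ _ _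
      _ = ∑ L ∈ Finset.univ.filter (fun L : ∀ i, Fin (k i) → Fin (m i) =>
            ∀ i : S, L i.1 (ψ i.1) = v i), Q L := by
          refine Finset.sum_congr ?_ (fun _ _ => rfl)
          apply Finset.filter_congr
          intro L _
          simp
  rw [key φ hφ, key φ' hφ']
  congr 1
  apply Finset.filter_congr
  intro L _
  constructor <;> intro h i
  · rw [← hfree i.1 i.2]; exact h i
  · rw [hfree i.1 i.2]; exact h i
end

section
/- (Fine's inequalities.) Let μ : Fin 2 × Fin 2 → Measure (Fin 2 × Fin 2) assign to each pair of factor points (j₁, j₂) a probability measure on pairs of binary outcomes, satisfying marginal selectivity: the first marginal of μ (j₁, j₂) does not depend on j₂ and the second marginal does not depend on j₁. Write p j₁ j₂ := (μ (j₁, j₂) {(1,1)}).toReal, q₁ j₁ := (μ (j₁, j₂) {(a, b) | a = 1}).toReal (independent of j₂), and q₂ j₂ := (μ (j₁, j₂) {(a, b) | b = 1}).toReal (independent of j₁). Then there exists a probability measure ξ on (Fin 2 → Fin 2) × (Fin 2 → Fin 2) whose pushforward under the map (L₁, L₂) ↦ (L₁ j₁, L₂ j₂) equals μ (j₁, j₂)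 for every (j₁, j₂) ∈ Fin 2 × Fin 2, if and only if for all j₁, j₁′, j₂, j₂′ ∈ Fin 2 with j₁ ≠ j₁′ and j₂ ≠ j₂′: −1 ≤ p j₁ j₂ + p j₁′ j₂ + p j₁′ j₂′ − p j₁ j₂′ − q₁ j₁′ − q₂ j₂ ≤ 0. -/
open MeasureTheory

private lemma fin2_cases (x : Fin 2) : x = 0 ∨ x = 1 := by omega

private lemma sum_pi2 {M : Type*} [AddCommMonoid M] (g : (Fin 2 → Fin 2) → M) :
    ∑ L : Fin 2 → Fin 2, g L = ∑ x : Fin 2, ∑ y : Fin 2, g ![x, y] := by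
  rw [← (finTwoArrowEquiv (Fin 2)).symm.sum_comp, Fintype.sum_prod_type]
  rfl

open scoped Classical in
private lemma meas_eq_sum' {α : Type*} [Fintype α] [MeasurableSpace α]
    [MeasurableSingletonClass α] (ν : Measure α) (S : Set α) :
    ν S = ∑ ω : α, if ω ∈ S then ν {ω} else 0 := by
  have h1 : S = ⋃ ω ∈ Finset.univ.filter (· ∈ S), ({ω} : Set α) := by
    ext x; simp
  nth_rewrite 1 [h1]
  rw [measure_biUnion_finset ?hd fun b _ => measurableSet_singleton b]
  · rw [Finset.sum_filter]
  · intro x hx y hy hxy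
    simpa using hxy

open scoped Classical in
private lemma meas_toReal_sum {α : Type*} [Fintype α] [MeasurableSpace α]
    [MeasurableSingletonClass α] (ν : Measure α) [IsFiniteMeasure ν] (S : Set α) :
    (ν S).toReal = ∑ ω : α, if ω ∈ S then (ν {ω}).toReal else 0 := by
  rw [meas_eq_sum' ν S, ENNReal.toReal_sum]
  · exact Finset.sum_congr rfl fun v _ => by split_ifs <;> simp
  · intro v _; split_ifs
    · exact measure_ne_top _ _
    · simp

set_option maxHeartbeats 2000000 in
private lemma fine_core (m : Fin 2 → Fin 2 → Fin 2 → Fin 2 → ℝ)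
    (hnn : ∀ i j a b, 0 ≤ m i j a b)
    (hs : ∀ i j, m i j 0 0 + m i j 0 1 + m i j 1 0 + m i j 1 1 = 1)
    (hqc : ∀ i j, m i j 1 0 + m i j 1 1 = m i 0 1 0 + m i 0 1 1)
    (hrc : ∀ i j, m i j 0 1 + m i j 1 1 = m 0 j 0 1 + m 0 j 1 1)
    (hU : ∀ i i' j j' : Fin 2, i ≠ i' → j ≠ j' →
      m i j 1 1 + m i' j 1 1 + m i' j' 1 1 - m i j' 1 1
        - (m i' j 1 0 + m i' j 1 1) - (m i j 0 1 + m i j 1 1) ≤ 0)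
    (hL : ∀ i i' j j' : Fin 2, i ≠ i' → j ≠ j' →
      -1 ≤ m i j 1 1 + m i' j 1 1 + m i' j' 1 1 - m i j' 1 1
        - (m i' j 1 0 + m i' j 1 1) - (m i j 0 1 + m i j 1 1)) :
    ∃ W : Fin 2 → Fin 2 → Fin 2 → Fin 2 → ℝ,
      (∀ a0 a1 b0 b1, 0 ≤ W a0 a1 b0 b1) ∧
      (∀ i j a b : Fin 2,
        (∑ a0 : Fin 2, ∑ a1 : Fin 2, ∑ b0 : Fin 2, ∑ b1 : Fin 2,
          (if ![a0, a1] i = a ∧ ![b0, b1] j = b then W a0 a1 b0 b1 else 0))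
          = m i j a b) := by
  classical
  obtain ⟨q, hq⟩ : ∃ q : Fin 2 → ℝ, ∀ i j, m i j 1 0 + m i j 1 1 = q i :=
    ⟨fun i => m i 0 1 0 + m i 0 1 1, fun i j => hqc i j⟩
  obtain ⟨r, hr⟩ : ∃ r : Fin 2 → ℝ, ∀ i j, m i j 0 1 + m i j 1 1 = r j :=
    ⟨fun j => m 0 j 0 1 + m 0 j 1 1, fun i j => hrc i j⟩
  -- basic relations
  have e10 : ∀ i j, m i j 1 0 = q i - m i j 1 1 := fun i j => by
    have := hq i j; linarith
  have e01 : ∀ i j, m i j 0 1 = r j - m i j 1 1 := fun i j => by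
    have := hr i j; linarith
  have e00 : ∀ i j, m i j 0 0 = 1 - q i - r j + m i j 1 1 := fun i j => by
    have := hs i j; have := e10 i j; have := e01 i j; linarith
  have b0 : ∀ i j, 0 ≤ m i j 1 1 := fun i j => hnn i j 1 1
  have bq : ∀ i j, m i j 1 1 ≤ q i := fun i j => by
    have := hnn i j 1 0; have := e10 i j; linarith
  have br : ∀ i j, m i j 1 1 ≤ r j := fun i j => by
    have := hnn i j 0 1; have := e01 i j; linarith
  have bqr : ∀ i j, q i + r j - 1 ≤ m i j 1 1 := fun i j => by
    have := hnn i j 0 0; have := e00 i j; linarith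
  -- Fine instances in q/r form
  have hU' : ∀ i i' j j' : Fin 2, i ≠ i' → j ≠ j' →
      m i j 1 1 + m i' j 1 1 + m i' j' 1 1 - m i j' 1 1 - q i' - r j ≤ 0 := by
    intro i i' j j' h1 h2
    have := hU i i' j j' h1 h2; have := hq i' j; have := hr i j; linarith
  have hL' : ∀ i i' j j' : Fin 2, i ≠ i' → j ≠ j' →
      -1 ≤ m i j 1 1 + m i' j 1 1 + m i' j' 1 1 - m i j' 1 1 - q i' - r j := by
    intro i i' j j' h1 h2
    have := hL i i' j j' h1 h2; have := hq i' j; have := hr i j; linarith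
  have h01 : (0 : Fin 2) ≠ 1 := by decide
  have h10 : (1 : Fin 2) ≠ 0 := by decide
  -- choose u
  obtain ⟨u, hu⟩ :
      ∃ u : ℝ, (0 ≤ u ∧ q 0 + q 1 - 1 ≤ u ∧
        m 0 0 1 1 + m 1 0 1 1 - r 0 ≤ u ∧ m 0 1 1 1 + m 1 1 1 1 - r 1 ≤ u ∧
        q 0 + q 1 + r 0 - m 0 0 1 1 - m 1 0 1 1 - 1 ≤ u ∧
        q 0 + q 1 + r 1 - m 0 1 1 1 - m 1 1 1 1 - 1 ≤ u) ∧
        (u ≤ q 0 ∧ u ≤ q 1 ∧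
        u ≤ q 0 + m 1 0 1 1 - m 0 0 1 1 ∧ u ≤ q 1 + m 0 0 1 1 - m 1 0 1 1 ∧
        u ≤ q 0 + m 1 1 1 1 - m 0 1 1 1 ∧ u ≤ q 1 + m 0 1 1 1 - m 1 1 1 1) := by
    refine ⟨max (max 0 (q 0 + q 1 - 1))
      (max (max (m 0 0 1 1 + m 1 0 1 1 - r 0) (m 0 1 1 1 + m 1 1 1 1 - r 1))
        (max (q 0 + q 1 + r 0 - m 0 0 1 1 - m 1 0 1 1 - 1)
          (q 0 + q 1 + r 1 - m 0 1 1 1 - m 1 1 1 1 - 1))), ?_, ?_⟩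
    · refine ⟨?_, ?_, ?_, ?_, ?_, ?_⟩ <;> simp [le_max_iff]
    · simp only [max_le_iff]
      refine ⟨⟨⟨?_, ?_⟩, ⟨?_, ?_⟩, ?_, ?_⟩, ⟨⟨?_, ?_⟩, ⟨?_, ?_⟩, ?_, ?_⟩,
        ⟨⟨?_, ?_⟩, ⟨?_, ?_⟩, ?_, ?_⟩, ⟨⟨?_, ?_⟩, ⟨?_, ?_⟩, ?_, ?_⟩,
        ⟨⟨?_, ?_⟩, ⟨?_, ?_⟩, ?_, ?_⟩, ⟨⟨?_, ?_⟩, ⟨?_, ?_⟩, ?_, ?_⟩⟩ <;>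
      first
        | linarith [b0 0 0, b0 0 1, b0 1 0, b0 1 1, bq 0 0, bq 0 1, bq 1 0, bq 1 1,
            br 0 0, br 0 1, br 1 0, br 1 1, bqr 0 0, bqr 0 1, bqr 1 0, bqr 1 1,
            hU' 0 1 0 1 h01 h01, hU' 1 0 0 1 h10 h01, hU' 0 1 1 0 h01 h10,
            hU' 1 0 1 0 h10 h10,
            hL' 0 1 0 1 h01 h01, hL' 1 0 0 1 h10 h01, hL' 0 1 1 0 h01 h10,
            hL' 1 0 1 0 h10 h10]
  obtain ⟨⟨hu1, hu2, hu3, hu4, hu5, hu6⟩, hv1, hv2, hv3, hv4, hv5, hv6⟩ := hu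
  have hu3' : ∀ j : Fin 2, m 0 j 1 1 + m 1 j 1 1 - r j ≤ u := by
    intro j; fin_cases j; exacts [hu3, hu4]
  have hu5' : ∀ j : Fin 2, q 0 + q 1 + r j - m 0 j 1 1 - m 1 j 1 1 - 1 ≤ u := by
    intro j; fin_cases j; exacts [hu5, hu6]
  have hv3' : ∀ j : Fin 2, u ≤ q 0 + m 1 j 1 1 - m 0 j 1 1 := by
    intro j; fin_cases j; exacts [hv3, hv5]
  have hv4' : ∀ j : Fin 2, u ≤ q 1 + m 0 j 1 1 - m 1 j 1 1 := by
    intro j; fin_cases j; exacts [hv4, hv6]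
  -- choose t j
  have ht : ∀ j : Fin 2, ∃ t : ℝ,
      (0 ≤ t ∧ m 0 j 1 1 - q 0 + u ≤ t ∧ m 1 j 1 1 - q 1 + u ≤ t ∧
        m 0 j 1 1 + m 1 j 1 1 - r j ≤ t) ∧
      (t ≤ u ∧ t ≤ m 0 j 1 1 ∧ t ≤ m 1 j 1 1 ∧
        t ≤ 1 - q 0 - q 1 + u - r j + m 0 j 1 1 + m 1 j 1 1) := by
    intro j
    refine ⟨max (max 0 (m 0 j 1 1 - q 0 + u))
      (max (m 1 j 1 1 - q 1 + u) (m 0 j 1 1 + m 1 j 1 1 - r j)), ⟨?_, ?_, ?_, ?_⟩, ?_⟩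
    · simp [le_max_iff]
    · simp [le_max_iff]
    · simp [le_max_iff]
    · simp [le_max_iff]
    · simp only [max_le_iff]
      refine ⟨⟨⟨?_, ?_⟩, ?_, ?_⟩, ⟨⟨?_, ?_⟩, ?_, ?_⟩, ⟨⟨?_, ?_⟩, ?_, ?_⟩,
        ⟨⟨?_, ?_⟩, ?_, ?_⟩⟩ <;>
      linarith [b0 0 j, b0 1 j, bq 0 j, bq 1 j, br 0 j, br 1 j, bqr 0 j, bqr 1 j,
        hu3' j, hu5' j, hv3' j, hv4' j]
  choose t htl htu using ht
  -- the building blocks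
  set lam : Fin 2 → Fin 2 → ℝ := fun a0 a1 =>
    if a0 = 1 then (if a1 = 1 then u else q 0 - u)
    else (if a1 = 1 then q 1 - u else 1 - q 0 - q 1 + u) with hlam
  set sv : Fin 2 → Fin 2 → Fin 2 → ℝ := fun j a0 a1 =>
    if a0 = 1 then (if a1 = 1 then t j else m 0 j 1 1 - t j)
    else (if a1 = 1 then m 1 j 1 1 - t j
      else r j - m 0 j 1 1 - m 1 j 1 1 + t j) with hsv
  set T : Fin 2 → Fin 2 → Fin 2 → Fin 2 → ℝ := fun j a0 a1 b =>
    if b = 1 then sv j a0 a1 else lam a0 a1 - sv j a0 a1 with hT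
  set W : Fin 2 → Fin 2 → Fin 2 → Fin 2 → ℝ := fun a0 a1 b0 b1 =>
    if lam a0 a1 = 0 then 0 else T 0 a0 a1 b0 * T 1 a0 a1 b1 / lam a0 a1 with hW
  have hlam0 : ∀ a0 a1, 0 ≤ lam a0 a1 := by
    intro a0 a1
    fin_cases a0 <;> fin_cases a1 <;> simp [hlam] <;> linarith
  have hsl : ∀ j a0 a1, 0 ≤ sv j a0 a1 ∧ sv j a0 a1 ≤ lam a0 a1 := by
    intro j a0 a1
    fin_cases a0 <;> fin_cases a1 <;> simp [hlam, hsv] <;>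
      constructor <;>
      linarith [htl j, htu j, b0 0 j, b0 1 j, bq 0 j, bq 1 j, br 0 j, br 1 j,
        (htl j).1, (htl j).2.1, (htl j).2.2.1, (htl j).2.2.2,
        (htu j).1, (htu j).2.1, (htu j).2.2.1, (htu j).2.2.2]
  have hTnn : ∀ j a0 a1 b, 0 ≤ T j a0 a1 b := by
    intro j a0 a1 b
    rcases fin2_cases b with h | h <;> subst h <;> simp [hT] <;>
      linarith [(hsl j a0 a1).1, (hsl j a0 a1).2]
  have hTle : ∀ j a0 a1 b, T j a0 a1 b ≤ lam a0 a1 := by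
    intro j a0 a1 b
    rcases fin2_cases b with h | h <;> subst h <;> simp [hT] <;>
      linarith [(hsl j a0 a1).1, (hsl j a0 a1).2]
  have hTsum : ∀ j a0 a1, T j a0 a1 0 + T j a0 a1 1 = lam a0 a1 := by
    intro j a0 a1; simp [hT]
  have hA : ∀ a0 a1 c, W a0 a1 c 0 + W a0 a1 c 1 = T 0 a0 a1 c := by
    intro a0 a1 c
    by_cases h : lam a0 a1 = 0
    · simp only [hW, if_pos h]
      have := hTnn 0 a0 a1 c
      have := hTle 0 a0 a1 c
      linarith
    · simp only [hW, if_neg h]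
      field_simp
      linear_combination T 0 a0 a1 c * hTsum 1 a0 a1
  have hB : ∀ a0 a1 c, W a0 a1 0 c + W a0 a1 1 c = T 1 a0 a1 c := by
    intro a0 a1 c
    by_cases h : lam a0 a1 = 0
    · simp only [hW, if_pos h]
      have := hTnn 1 a0 a1 c
      have := hTle 1 a0 a1 c
      linarith
    · simp only [hW, if_neg h]
      field_simp
      linear_combination T 1 a0 a1 c * hTsum 0 a0 a1
  have hM1 : ∀ j a b, T j a 0 b + T j a 1 b = m 0 j a b := by
    intro j a b
    fin_cases a <;> fin_cases b <;> simp [hT, hsv, hlam] <;>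
      linarith [e10 0 j, e01 0 j, e00 0 j]
  have hM2 : ∀ j a b, T j 0 a b + T j 1 a b = m 1 j a b := by
    intro j a b
    fin_cases a <;> fin_cases b <;> simp [hT, hsv, hlam] <;>
      linarith [e10 1 j, e01 1 j, e00 1 j]
  refine ⟨W, ?_, ?_⟩
  · intro a0 a1 b0 b1
    simp only [hW]
    split_ifs with h
    · exact le_rfl
    · exact div_nonneg (mul_nonneg (hTnn 0 a0 a1 b0) (hTnn 1 a0 a1 b1))
        (hlam0 a0 a1)
  · intro i j a b
    fin_cases i <;> fin_cases j <;> fin_cases a <;> fin_cases b <;>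
      simp only [Fin.mk_zero, Fin.mk_one, Fin.sum_univ_two, Matrix.cons_val_zero,
        Matrix.cons_val_one, Matrix.head_cons,
        show ((0 : Fin 2) = 1) = False from by simp,
        show ((1 : Fin 2) = 1) = True from by simp,
        show ((0 : Fin 2) = 0) = True from by simp,
        show ((1 : Fin 2) = 0) = False from by simp,
        true_and, false_and, and_true, and_false, if_true, if_false,
        add_zero, zero_add] <;>
      linarith [hA 0 0 0, hA 0 0 1, hA 0 1 0, hA 0 1 1, hA 1 0 0, hA 1 0 1,
        hA 1 1 0, hA 1 1 1, hB 0 0 0, hB 0 0 1, hB 0 1 0, hB 0 1 1, hB 1 0 0,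
        hB 1 0 1, hB 1 1 0, hB 1 1 1, hM1 0 0 0, hM1 0 0 1, hM1 0 1 0,
        hM1 0 1 1, hM1 1 0 0, hM1 1 0 1, hM1 1 1 0, hM1 1 1 1, hM2 0 0 0,
        hM2 0 0 1, hM2 0 1 0, hM2 0 1 1, hM2 1 0 0, hM2 1 0 1, hM2 1 1 0,
        hM2 1 1 1]

private lemma fine_forward
    (μ : Fin 2 × Fin 2 → Measure (Fin 2 × Fin 2))
    (hμ : ∀ j, IsProbabilityMeasure (μ j))
    (ξ : Measure ((Fin 2 → Fin 2) × (Fin 2 → Fin 2)))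
    (hξP : IsProbabilityMeasure ξ)
    (hξ : ∀ j₁ j₂ : Fin 2,
        Measure.map (fun Lp : (Fin 2 → Fin 2) × (Fin 2 → Fin 2) =>
          (Lp.1 j₁, Lp.2 j₂)) ξ = μ (j₁, j₂)) :
    (∀ j₁ j₁' j₂ j₂' : Fin 2, j₁ ≠ j₁' → j₂ ≠ j₂' →
      -1 ≤ (μ (j₁, j₂) {((1 : Fin 2), (1 : Fin 2))}).toReal
          + (μ (j₁', j₂) {((1 : Fin 2), (1 : Fin 2))}).toReal
          + (μ (j₁', j₂') {((1 : Fin 2), (1 : Fin 2))}).toReal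
          - (μ (j₁, j₂') {((1 : Fin 2), (1 : Fin 2))}).toReal
          - (μ (j₁', j₂) {a : Fin 2 × Fin 2 | a.1 = 1}).toReal
          - (μ (j₁, j₂) {a : Fin 2 × Fin 2 | a.2 = 1}).toReal ∧
      (μ (j₁, j₂) {((1 : Fin 2), (1 : Fin 2))}).toReal
          + (μ (j₁', j₂) {((1 : Fin 2), (1 : Fin 2))}).toReal
          + (μ (j₁', j₂') {((1 : Fin 2), (1 : Fin 2))}).toReal
          - (μ (j₁, j₂') {((1 : Fin 2), (1 : Fin 2))}).toReal
          - (μ (j₁', j₂) {a : Fin 2 × Fin 2 | a.1 = 1}).toReal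
          - (μ (j₁, j₂) {a : Fin 2 × Fin 2 | a.2 = 1}).toReal ≤ 0) := by
  classical
  intro i i' j j' hii hjj
  have hmapped : ∀ (a b : Fin 2) (S : Set (Fin 2 × Fin 2)),
      μ (a, b) S = ξ ((fun Lp : (Fin 2 → Fin 2) × (Fin 2 → Fin 2) =>
        (Lp.1 a, Lp.2 b)) ⁻¹' S) := by
    intro a b S
    rw [← hξ a b, Measure.map_apply (measurable_of_countable _)
      ((Set.to_countable S).measurableSet)]
  set c : (Fin 2 → Fin 2) × (Fin 2 → Fin 2) → ℝ := fun ω => (ξ {ω}).toReal with hc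
  have hc0 : ∀ ω, 0 ≤ c ω := fun ω => ENNReal.toReal_nonneg
  have hcsum : ∑ ω : (Fin 2 → Fin 2) × (Fin 2 → Fin 2), c ω = 1 := by
    have h := meas_toReal_sum ξ Set.univ
    simp only [Set.mem_univ, if_true, measure_univ, ENNReal.toReal_one] at h
    exact h.symm
  have E1 : ∀ a b : Fin 2, (μ (a, b) {((1 : Fin 2), (1 : Fin 2))}).toReal
      = ∑ ω : (Fin 2 → Fin 2) × (Fin 2 → Fin 2),
        if ω.1 a = 1 ∧ ω.2 b = 1 then c ω else 0 := by
    intro a b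
    rw [hmapped, meas_toReal_sum]
    simp only [Set.mem_preimage, Set.mem_singleton_iff, Prod.mk.injEq]
    rfl
  have E2 : ∀ a b : Fin 2, (μ (a, b) {x : Fin 2 × Fin 2 | x.1 = 1}).toReal
      = ∑ ω : (Fin 2 → Fin 2) × (Fin 2 → Fin 2), if ω.1 a = 1 then c ω else 0 := by
    intro a b
    rw [hmapped, meas_toReal_sum]
    simp only [Set.mem_preimage, Set.mem_setOf_eq]
    rfl
  have E3 : ∀ a b : Fin 2, (μ (a, b) {x : Fin 2 × Fin 2 | x.2 = 1}).toReal
      = ∑ ω : (Fin 2 → Fin 2) × (Fin 2 → Fin 2), if ω.2 b = 1 then c ω else 0 := by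
    intro a b
    rw [hmapped, meas_toReal_sum]
    simp only [Set.mem_preimage, Set.mem_setOf_eq]
    rfl
  rw [E1 i j, E1 i' j, E1 i' j', E1 i j', E2 i' j, E3 i j,
    ← Finset.sum_add_distrib, ← Finset.sum_add_distrib, ← Finset.sum_sub_distrib,
    ← Finset.sum_sub_distrib, ← Finset.sum_sub_distrib]
  constructor
  · have step : ∀ ω ∈ (Finset.univ : Finset ((Fin 2 → Fin 2) × (Fin 2 → Fin 2))),
        -c ω ≤ (if ω.1 i = 1 ∧ ω.2 j = 1 then c ω else 0)
          + (if ω.1 i' = 1 ∧ ω.2 j = 1 then c ω else 0)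
          + (if ω.1 i' = 1 ∧ ω.2 j' = 1 then c ω else 0)
          - (if ω.1 i = 1 ∧ ω.2 j' = 1 then c ω else 0)
          - (if ω.1 i' = 1 then c ω else 0)
          - (if ω.2 j = 1 then c ω else 0) := by
      intro ω _
      rcases fin2_cases (ω.1 i) with h1 | h1 <;> rcases fin2_cases (ω.1 i') with h2 | h2 <;>
        rcases fin2_cases (ω.2 j) with h3 | h3 <;> rcases fin2_cases (ω.2 j') with h4 | h4 <;>
        simp [h1, h2, h3, h4] <;> linarith [hc0 ω]
    have := Finset.sum_le_sum step
    rw [Finset.sum_neg_distrib, hcsum] at this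
    exact this
  · apply Finset.sum_nonpos
    intro ω _
    rcases fin2_cases (ω.1 i) with h1 | h1 <;> rcases fin2_cases (ω.1 i') with h2 | h2 <;>
      rcases fin2_cases (ω.2 j) with h3 | h3 <;> rcases fin2_cases (ω.2 j') with h4 | h4 <;>
      simp [h1, h2, h3, h4] <;> linarith [hc0 ω]

private lemma fine_backward
    (μ : Fin 2 × Fin 2 → Measure (Fin 2 × Fin 2))
    (hμ : ∀ j, IsProbabilityMeasure (μ j))
    (hMS1 : ∀ j₁ j₂ j₂' : Fin 2,
      Measure.map Prod.fst (μ (j₁, j₂)) = Measure.map Prod.fst (μ (j₁, j₂')))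
    (hMS2 : ∀ j₁ j₁' j₂ : Fin 2,
      Measure.map Prod.snd (μ (j₁, j₂)) = Measure.map Prod.snd (μ (j₁', j₂)))
    (hFine : ∀ j₁ j₁' j₂ j₂' : Fin 2, j₁ ≠ j₁' → j₂ ≠ j₂' →
      -1 ≤ (μ (j₁, j₂) {((1 : Fin 2), (1 : Fin 2))}).toReal
          + (μ (j₁', j₂) {((1 : Fin 2), (1 : Fin 2))}).toReal
          + (μ (j₁', j₂') {((1 : Fin 2), (1 : Fin 2))}).toReal
          - (μ (j₁, j₂') {((1 : Fin 2), (1 : Fin 2))}).toReal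
          - (μ (j₁', j₂) {a : Fin 2 × Fin 2 | a.1 = 1}).toReal
          - (μ (j₁, j₂) {a : Fin 2 × Fin 2 | a.2 = 1}).toReal ∧
      (μ (j₁, j₂) {((1 : Fin 2), (1 : Fin 2))}).toReal
          + (μ (j₁', j₂) {((1 : Fin 2), (1 : Fin 2))}).toReal
          + (μ (j₁', j₂') {((1 : Fin 2), (1 : Fin 2))}).toReal
          - (μ (j₁, j₂') {((1 : Fin 2), (1 : Fin 2))}).toReal
          - (μ (j₁', j₂) {a : Fin 2 × Fin 2 | a.1 = 1}).toReal
          - (μ (j₁, j₂) {a : Fin 2 × Fin 2 | a.2 = 1}).toReal ≤ 0) :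
    (∃ ξ : Measure ((Fin 2 → Fin 2) × (Fin 2 → Fin 2)),
      IsProbabilityMeasure ξ ∧
      ∀ j₁ j₂ : Fin 2,
        Measure.map (fun Lp : (Fin 2 → Fin 2) × (Fin 2 → Fin 2) =>
          (Lp.1 j₁, Lp.2 j₂)) ξ = μ (j₁, j₂)) := by
  classical
  set m : Fin 2 → Fin 2 → Fin 2 → Fin 2 → ℝ :=
    fun i j a b => (μ (i, j) {(a, b)}).toReal with hm
  have hnn : ∀ i j a b, 0 ≤ m i j a b := fun i j a b => ENNReal.toReal_nonneg
  have hsum4 : ∀ i j : Fin 2, m i j 0 0 + m i j 0 1 + m i j 1 0 + m i j 1 1 = 1 := by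
    intro i j
    have h := meas_toReal_sum (μ (i, j)) Set.univ
    simp only [Set.mem_univ, if_true, measure_univ, ENNReal.toReal_one,
      Fintype.sum_prod_type, Fin.sum_univ_two] at h
    simp only [hm]
    linarith
  -- marginal identities
  have hmarg1 : ∀ i j : Fin 2,
      (μ (i, j) {a : Fin 2 × Fin 2 | a.1 = 1}).toReal = m i j 1 0 + m i j 1 1 := by
    intro i j
    rw [meas_toReal_sum]
    simp only [Set.mem_setOf_eq, Fintype.sum_prod_type, Fin.sum_univ_two]
    simp [hm]
  have hmarg2 : ∀ i j : Fin 2,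
      (μ (i, j) {a : Fin 2 × Fin 2 | a.2 = 1}).toReal = m i j 0 1 + m i j 1 1 := by
    intro i j
    rw [meas_toReal_sum]
    simp only [Set.mem_setOf_eq, Fintype.sum_prod_type, Fin.sum_univ_two]
    simp [hm]
  have hqc : ∀ i j : Fin 2, m i j 1 0 + m i j 1 1 = m i 0 1 0 + m i 0 1 1 := by
    intro i j
    rw [← hmarg1 i j, ← hmarg1 i 0]
    have hpre : {a : Fin 2 × Fin 2 | a.1 = 1} = Prod.fst ⁻¹' {1} := rfl
    rw [hpre, ← Measure.map_apply measurable_fst (measurableSet_singleton _),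
      ← Measure.map_apply measurable_fst (measurableSet_singleton _), hMS1 i j 0]
  have hrc : ∀ i j : Fin 2, m i j 0 1 + m i j 1 1 = m 0 j 0 1 + m 0 j 1 1 := by
    intro i j
    rw [← hmarg2 i j, ← hmarg2 0 j]
    have hpre : {a : Fin 2 × Fin 2 | a.2 = 1} = Prod.snd ⁻¹' {1} := rfl
    rw [hpre, ← Measure.map_apply measurable_snd (measurableSet_singleton _),
      ← Measure.map_apply measurable_snd (measurableSet_singleton _), hMS2 i 0 j]
  have hm11 : ∀ i j : Fin 2, (μ (i, j) {((1 : Fin 2), (1 : Fin 2))}).toReal = m i j 1 1 :=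
    fun i j => rfl
  have hU : ∀ i i' j j' : Fin 2, i ≠ i' → j ≠ j' →
      m i j 1 1 + m i' j 1 1 + m i' j' 1 1 - m i j' 1 1
        - (m i' j 1 0 + m i' j 1 1) - (m i j 0 1 + m i j 1 1) ≤ 0 := by
    intro i i' j j' h1 h2
    have h := (hFine i i' j j' h1 h2).2
    rw [hm11, hm11, hm11, hm11, hmarg1, hmarg2] at h
    linarith
  have hL : ∀ i i' j j' : Fin 2, i ≠ i' → j ≠ j' →
      -1 ≤ m i j 1 1 + m i' j 1 1 + m i' j' 1 1 - m i j' 1 1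
        - (m i' j 1 0 + m i' j 1 1) - (m i j 0 1 + m i j 1 1) := by
    intro i i' j j' h1 h2
    have h := (hFine i i' j j' h1 h2).1
    rw [hm11, hm11, hm11, hm11, hmarg1, hmarg2] at h
    linarith
  obtain ⟨W, hW0, hWm⟩ := fine_core m hnn hsum4 hqc hrc hU hL
  set wf : (Fin 2 → Fin 2) × (Fin 2 → Fin 2) → ℝ :=
    fun ω => W (ω.1 0) (ω.1 1) (ω.2 0) (ω.2 1) with hwf
  set ξ : Measure ((Fin 2 → Fin 2) × (Fin 2 → Fin 2)) :=
    ∑ ω ∈ Finset.univ, ENNReal.ofReal (wf ω) • Measure.dirac ω with hξdef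
  have hξapp : ∀ S : Set ((Fin 2 → Fin 2) × (Fin 2 → Fin 2)),
      ξ S = ∑ ω : (Fin 2 → Fin 2) × (Fin 2 → Fin 2),
        if ω ∈ S then ENNReal.ofReal (wf ω) else 0 := by
    intro S
    rw [hξdef, Measure.finset_sum_apply]
    refine Finset.sum_congr rfl fun ω _ => ?_
    rw [Measure.smul_apply, Measure.dirac_apply, Set.indicator_apply]
    split_ifs <;> simp
  have hmapeq : ∀ j₁ j₂ : Fin 2,
      Measure.map (fun Lp : (Fin 2 → Fin 2) × (Fin 2 → Fin 2) =>
        (Lp.1 j₁, Lp.2 j₂)) ξ = μ (j₁, j₂) := by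
    intro j₁ j₂
    apply Measure.ext_of_singleton
    rintro ⟨a, b⟩
    rw [Measure.map_apply (measurable_of_countable _) (measurableSet_singleton _), hξapp]
    have hmem : ∀ ω : (Fin 2 → Fin 2) × (Fin 2 → Fin 2),
        (ω ∈ (fun Lp : (Fin 2 → Fin 2) × (Fin 2 → Fin 2) =>
          (Lp.1 j₁, Lp.2 j₂)) ⁻¹' {(a, b)}) = (ω.1 j₁ = a ∧ ω.2 j₂ = b) := by
      intro ω
      simp [Set.mem_preimage, Prod.ext_iff]
    simp only [hmem]
    have hreal : (∑ ω : (Fin 2 → Fin 2) × (Fin 2 → Fin 2),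
        if ω.1 j₁ = a ∧ ω.2 j₂ = b then ENNReal.ofReal (wf ω) else 0)
        = ENNReal.ofReal (∑ ω : (Fin 2 → Fin 2) × (Fin 2 → Fin 2),
          if ω.1 j₁ = a ∧ ω.2 j₂ = b then wf ω else 0) := by
      rw [ENNReal.ofReal_sum_of_nonneg]
      · refine Finset.sum_congr rfl fun ω _ => ?_
        split_ifs <;> simp
      · intro ω _
        split_ifs with h
        · exact hW0 _ _ _ _
        · exact le_rfl
    rw [hreal]
    have hsum : (∑ ω : (Fin 2 → Fin 2) × (Fin 2 → Fin 2),
        if ω.1 j₁ = a ∧ ω.2 j₂ = b then wf ω else 0) = m j₁ j₂ a b := by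
      rw [Fintype.sum_prod_type]
      rw [sum_pi2]
      simp only [sum_pi2]
      simp only [hwf, Matrix.cons_val_zero, Matrix.cons_val_one, Matrix.head_cons]
      exact hWm j₁ j₂ a b
    rw [hsum, hm]
    exact ENNReal.ofReal_toReal (measure_ne_top _ _)
  have hprob : IsProbabilityMeasure ξ := by
    constructor
    have h1 : ξ Set.univ = Measure.map (fun Lp : (Fin 2 → Fin 2) × (Fin 2 → Fin 2) =>
        (Lp.1 0, Lp.2 0)) ξ Set.univ := by
      rw [Measure.map_apply (measurable_of_countable _) MeasurableSet.univ,
        Set.preimage_univ]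
    rw [h1, hmapeq 0 0, measure_univ]
  exact ⟨ξ, hprob, hmapeq⟩

/-- Fine's inequalities: for two binary factors and two binary outputs satisfying
marginal selectivity, a JDC-measure exists iff for all `j₁ ≠ j₁'` and `j₂ ≠ j₂'`,
`−1 ≤ p j₁ j₂ + p j₁' j₂ + p j₁' j₂' − p j₁ j₂' − q₁ j₁' − q₂ j₂ ≤ 0`. -/
theorem fine_inequalities
    (μ : Fin 2 × Fin 2 → Measure (Fin 2 × Fin 2))
    (hμ : ∀ j, IsProbabilityMeasure (μ j))
    (hMS1 : ∀ j₁ j₂ j₂' : Fin 2,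
      Measure.map Prod.fst (μ (j₁, j₂)) = Measure.map Prod.fst (μ (j₁, j₂')))
    (hMS2 : ∀ j₁ j₁' j₂ : Fin 2,
      Measure.map Prod.snd (μ (j₁, j₂)) = Measure.map Prod.snd (μ (j₁', j₂))) :
    (∃ ξ : Measure ((Fin 2 → Fin 2) × (Fin 2 → Fin 2)),
      IsProbabilityMeasure ξ ∧
      ∀ j₁ j₂ : Fin 2,
        Measure.map (fun Lp : (Fin 2 → Fin 2) × (Fin 2 → Fin 2) =>
          (Lp.1 j₁, Lp.2 j₂)) ξ = μ (j₁, j₂)) ↔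
    (∀ j₁ j₁' j₂ j₂' : Fin 2, j₁ ≠ j₁' → j₂ ≠ j₂' →
      -1 ≤ (μ (j₁, j₂) {((1 : Fin 2), (1 : Fin 2))}).toReal
          + (μ (j₁', j₂) {((1 : Fin 2), (1 : Fin 2))}).toReal
          + (μ (j₁', j₂') {((1 : Fin 2), (1 : Fin 2))}).toReal
          - (μ (j₁, j₂') {((1 : Fin 2), (1 : Fin 2))}).toReal
          - (μ (j₁', j₂) {a : Fin 2 × Fin 2 | a.1 = 1}).toReal
          - (μ (j₁, j₂) {a : Fin 2 × Fin 2 | a.2 = 1}).toReal ∧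
      (μ (j₁, j₂) {((1 : Fin 2), (1 : Fin 2))}).toReal
          + (μ (j₁', j₂) {((1 : Fin 2), (1 : Fin 2))}).toReal
          + (μ (j₁', j₂') {((1 : Fin 2), (1 : Fin 2))}).toReal
          - (μ (j₁, j₂') {((1 : Fin 2), (1 : Fin 2))}).toReal
          - (μ (j₁', j₂) {a : Fin 2 × Fin 2 | a.1 = 1}).toReal
          - (μ (j₁, j₂) {a : Fin 2 × Fin 2 | a.2 = 1}).toReal ≤ 0) := by
  constructor
  · rintro ⟨ξ, hξP, hξ⟩
    exact fine_forward μ hμ ξ hξP hξ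
  · intro h
    exact fine_backward μ hμ hMS1 hMS2 h
end

section
/- (Grouping of factor points preserves selective influences.) Fix an index i₀ ∈ Fin n, two distinct points x, y ∈ Fin (k i₀), and a real number π with 0 < π < 1. Suppose T is such that for every treatment φ, the treatment obtained from φ by setting its i₀-th coordinate to x belongs to T if and only if the treatment obtained by setting it to y belongs to T. Let T′ := {φ ∈ T : φ i₀ ≠ y}, and define for φ ∈ T′: ν φ := π • μ φ + (1 − π) • μ (Function.update φ i₀ y) if φ i₀ = x, and ν φ := μ φ otherwise. If the family (μ φ)_{φ ∈ T} has a JDC-measure, then the coarsened family (ν φ)_{φ ∈ T′} has a JDC-measure. -/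
open MeasureTheory

/-- Grouping of factor points preserves selective influences: mixing two points `x ≠ y`
of the `i₀`-th factor with weights `π` and `1 − π` yields a coarsened family which still
admits a JDC-measure whenever the original family does. -/
theorem jdc_of_grouping_factor_points
    (n : ℕ) (hn : 1 ≤ n) (k m : Fin n → ℕ)
    (hk : ∀ i, 1 ≤ k i) (hm : ∀ i, 1 ≤ m i)
    (T : Set (∀ i, Fin (k i))) (hT : T.Nonempty)
    (μ : (∀ i, Fin (k i)) → Measure (∀ i, Fin (m i)))
    (hμ : ∀ φ ∈ T, IsProbabilityMeasure (μ φ))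
    (i₀ : Fin n) (x y : Fin (k i₀)) (hxy : x ≠ y)
    (π : ℝ) (hπ0 : 0 < π) (hπ1 : π < 1)
    (hTxy : ∀ φ : ∀ i, Fin (k i),
      Function.update φ i₀ x ∈ T ↔ Function.update φ i₀ y ∈ T)
    (T' : Set (∀ i, Fin (k i))) (hT' : T' = {φ ∈ T | φ i₀ ≠ y})
    (ν : (∀ i, Fin (k i)) → Measure (∀ i, Fin (m i)))
    (hν : ∀ φ ∈ T', ν φ =
      if φ i₀ = x then
        ENNReal.ofReal π • μ φ + ENNReal.ofReal (1 - π) • μ (Function.update φ i₀ y)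
      else μ φ)
    (hJDC : ∃ ξ : Measure (∀ i, Fin (k i) → Fin (m i)),
      IsProbabilityMeasure ξ ∧
      ∀ φ ∈ T, Measure.map (fun L => fun i => L i (φ i)) ξ = μ φ) :
    ∃ ξ' : Measure (∀ i, Fin (k i) → Fin (m i)),
      IsProbabilityMeasure ξ' ∧
      ∀ φ ∈ T', Measure.map (fun L => fun i => L i (φ i)) ξ' = ν φ := by
  obtain ⟨ξ, hξ, hmap⟩ := hJDC
  have hπ0' : (0:ℝ) ≤ π := hπ0.le
  have hπ1' : (0:ℝ) ≤ 1 - π := by linarith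
  have hsum : ENNReal.ofReal π + ENNReal.ofReal (1 - π) = 1 := by
    rw [← ENNReal.ofReal_add hπ0' hπ1']; norm_num
  -- the "relabeling" map sending L to the sampler whose value at (i₀, x) is L i₀ y
  set Fy : (∀ i, Fin (k i) → Fin (m i)) → (∀ i, Fin (k i) → Fin (m i)) :=
    fun L => Function.update L i₀ (Function.update (L i₀) x (L i₀ y)) with hFy
  have hFymeas : Measurable Fy := measurable_of_countable Fy
  refine ⟨ENNReal.ofReal π • ξ + ENNReal.ofReal (1 - π) • Measure.map Fy ξ, ?_, ?_⟩
  · constructor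
    have : (Measure.map Fy ξ) Set.univ = 1 := by
      rw [Measure.map_apply hFymeas MeasurableSet.univ]
      simp
    simp [Measure.add_apply, Measure.smul_apply, this, measure_univ, hsum]
  · intro φ hφ
    rw [hT'] at hφ
    obtain ⟨hφT, hφy⟩ := hφ
    have hGmeas : Measurable (fun L : ∀ i, Fin (k i) → Fin (m i) => fun i => L i (φ i)) :=
      measurable_of_countable _
    rw [hν φ (by rw [hT']; exact ⟨hφT, hφy⟩)]
    rw [Measure.map_add _ _ hGmeas, Measure.map_smul, Measure.map_smul,
      Measure.map_map hGmeas hFymeas]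
    by_cases hx : φ i₀ = x
    · have hcomp : ((fun L : ∀ i, Fin (k i) → Fin (m i) => fun i => L i (φ i)) ∘ Fy)
          = fun L => fun i => L i (Function.update φ i₀ y i) := by
        funext L
        funext i
        by_cases hi : i = i₀
        · subst hi
          simp [hFy, Function.update_self, hx]
        · simp [hFy, Function.update_of_ne hi]
      have hupd : Function.update φ i₀ y ∈ T := by
        have : Function.update φ i₀ x ∈ T := by
          rw [← hx, Function.update_eq_self]; exact hφT
        exact (hTxy φ).mp this
      rw [hcomp, hmap φ hφT, hmap _ hupd, if_pos hx]
    · have hcomp : ((fun L : ∀ i, Fin (k i) → Fin (m i) => fun i => L i (φ i)) ∘ Fy)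
          = fun L => fun i => L i (φ i) := by
        funext L
        funext i
        by_cases hi : i = i₀
        · subst hi
          simp [hFy, Function.update_self, Function.update_of_ne hx]
        · simp [hFy, Function.update_of_ne hi]
      rw [hcomp, hmap φ hφT, if_neg hx, ← add_smul, hsum, one_smul]
end
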